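/- arXiv:2301.00932 — 6 statements merged into one kernel-verified Lean document; each statement's English description precedes it below -/
import Mathlib

section
/- For every n ≥ 3, the cycle C_n is the only connected simple graph without isolated vertices, other than possibly K_{1,3} when n = 3, whose line graph is isomorphic to C_n. In particular, for n = 5: C_5 is the only iso-free graph whose line graph is isomorphic to C_5. -/
open SimpleGraph

open Fin.CommRing

section Aux

variable {V : Type} {G : SimpleGraph V} {m : ℕ}

private lemma fin_one_ne_zero : (1 : Fin (m+3)) ≠ 0 := by
  intro h
  have h3 : (1:ℕ) % (m+3) = (0 : Fin (m+3)).val := congrArg Fin.val h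
  have h0 : (0 : Fin (m+3)).val = 0 := rfl
  rw [h0, Nat.mod_eq_of_lt (by omega)] at h3; omega

private lemma fin_two_ne_zero : (2 : Fin (m+3)) ≠ 0 := by
  intro h
  have h3 : (2:ℕ) % (m+3) = (0 : Fin (m+3)).val := congrArg Fin.val h
  have h0 : (0 : Fin (m+3)).val = 0 := rfl
  rw [h0, Nat.mod_eq_of_lt (by omega)] at h3; omega

private lemma fin_three_eq_zero (h : (3 : Fin (m+3)) = 0) : m = 0 := by
  have h3 : (3:ℕ) % (m+3) = (0 : Fin (m+3)).val := congrArg Fin.val h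
  have h0 : (0 : Fin (m+3)).val = 0 := rfl
  rw [h0] at h3
  obtain _ | k := m
  · rfl
  · rw [Nat.mod_eq_of_lt (by omega)] at h3; omega

private lemma cyc_adj {u v : Fin (m+3)} :
    (cycleGraph (m+3)).Adj u v ↔ u - v = 1 ∨ v - u = 1 :=
  cycleGraph_adj (n := m+1)

/-- a triangle in `cycleGraph (m+3)` forces `m = 0`. -/
private lemma triangle_m_eq_zero {a b c : Fin (m+3)}
    (hab : (cycleGraph (m+3)).Adj a b) (hbc : (cycleGraph (m+3)).Adj b c)
    (hac : (cycleGraph (m+3)).Adj a c) : m = 0 := by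
  have hab' := hab.ne
  have hbc' := hbc.ne
  have hac' := hac.ne
  rw [cyc_adj] at hab hbc hac
  apply fin_three_eq_zero (m := m)
  rcases hab with h1 | h1 <;> rcases hbc with h2 | h2 <;> rcases hac with h3 | h3
  · exact absurd (show (1 : Fin (m+3)) = 0 by linear_combination -h1 - h2 + h3)
      (fin_one_ne_zero (m := m))
  · linear_combination -h1 - h2 - h3
  · exact absurd (show a = c by linear_combination h1 - h2) hac'
  · exact absurd (show (1 : Fin (m+3)) = 0 by linear_combination -h1 + h2 - h3)
      (fin_one_ne_zero (m := m))
  · exact absurd (show a = c by linear_combination -h1 + h2) hac'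
  · exact absurd (show (1 : Fin (m+3)) = 0 by linear_combination h1 - h2 - h3)
      (fin_one_ne_zero (m := m))
  · linear_combination -h1 - h2 - h3
  · exact absurd (show (1 : Fin (m+3)) = 0 by linear_combination -h1 - h2 + h3)
      (fin_one_ne_zero (m := m))

private lemma three_ne {α : Type} {a b x y z : α} (hxy : x ≠ y) (hxz : x ≠ z) (hyz : y ≠ z)
    (hx : x = a ∨ x = b) (hy : y = a ∨ y = b) (hz : z = a ∨ z = b) : False := by
  rcases hx with rfl | rfl <;> rcases hy with rfl | rfl <;> rcases hz with rfl | rfl <;> simp_all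

private lemma mem_edge {z : Sym2 V} (hz : z ∈ G.edgeSet) {v : V} (h : v ∈ z) :
    ∃ w, G.Adj v w ∧ z = s(v, w) := by
  induction z using Sym2.ind with
  | _ x y =>
    rw [Sym2.mem_iff] at h
    rcases h with rfl | rfl
    · exact ⟨y, G.mem_edgeSet.mp hz, rfl⟩
    · exact ⟨x, (G.mem_edgeSet.mp hz).symm, Sym2.eq_swap⟩

/-- every vertex of the line graph of `G` (i.e. edge of `G`) has exactly two neighbours,
given an isomorphism with a cycle. -/
private lemma two_line_nbrs (f : G.lineGraph ≃g cycleGraph (m+3)) (e : G.edgeSet) :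
    ∃ a b : G.edgeSet, a ≠ b ∧ ∀ x, G.lineGraph.Adj e x ↔ (x = a ∨ x = b) := by
  refine ⟨f.symm (f e - 1), f.symm (f e + 1), ?_, ?_⟩
  · intro h
    have := f.symm.injective h
    have h2 : (2 : Fin (m+3)) = 0 := by linear_combination - this
    exact fin_two_ne_zero (m := m) h2
  · intro x
    have : G.lineGraph.Adj e x ↔ (cycleGraph (m+3)).Adj (f e) (f x) := (f.map_adj_iff).symm
    rw [this, cyc_adj]
    constructor
    · rintro (h | h)
      · left
        have : f x = f e - 1 := by linear_combination -h
        rw [← this, RelIso.symm_apply_apply]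
      · right
        have : f x = f e + 1 := by linear_combination h
        rw [← this, RelIso.symm_apply_apply]
    · rintro (rfl | rfl) <;> rw [RelIso.apply_symm_apply]
      · left; ring
      · right; ring

private lemma line_adj_of_shared {e₁ e₂ : G.edgeSet} (hne : e₁ ≠ e₂) {v : V}
    (h1 : v ∈ (e₁ : Sym2 V)) (h2 : v ∈ (e₂ : Sym2 V)) : G.lineGraph.Adj e₁ e₂ :=
  lineGraph_adj_iff_exists.mpr ⟨hne, v, h1, h2⟩

private lemma edge_mk_ne {v w x : V} (hvw : G.Adj v w) (hvx : G.Adj v x) (h : w ≠ x) :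
    (⟨s(v, w), hvw⟩ : G.edgeSet) ≠ ⟨s(v, x), hvx⟩ := by
  intro hh
  exact h (Sym2.congr_right.mp (congrArg Subtype.val hh))

/-- a vertex with three distinct neighbours gives a triangle in the line graph, so `m = 0`. -/
private lemma deg3_m_eq_zero (f : G.lineGraph ≃g cycleGraph (m+3)) {v w₁ w₂ w₃ : V}
    (h1 : G.Adj v w₁) (h2 : G.Adj v w₂) (h3 : G.Adj v w₃)
    (h12 : w₁ ≠ w₂) (h13 : w₁ ≠ w₃) (h23 : w₂ ≠ w₃) : m = 0 := by
  set e₁ : G.edgeSet := ⟨s(v, w₁), h1⟩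
  set e₂ : G.edgeSet := ⟨s(v, w₂), h2⟩
  set e₃ : G.edgeSet := ⟨s(v, w₃), h3⟩
  have a12 : G.lineGraph.Adj e₁ e₂ :=
    line_adj_of_shared (edge_mk_ne h1 h2 h12) (Sym2.mem_mk_left _ _) (Sym2.mem_mk_left _ _)
  have a23 : G.lineGraph.Adj e₂ e₃ :=
    line_adj_of_shared (edge_mk_ne h2 h3 h23) (Sym2.mem_mk_left _ _) (Sym2.mem_mk_left _ _)
  have a13 : G.lineGraph.Adj e₁ e₃ :=
    line_adj_of_shared (edge_mk_ne h1 h3 h13) (Sym2.mem_mk_left _ _) (Sym2.mem_mk_left _ _)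
  exact triangle_m_eq_zero (f.map_adj_iff.mpr a12) (f.map_adj_iff.mpr a23) (f.map_adj_iff.mpr a13)

/-- a degree-one vertex forces its neighbour to have three distinct neighbours. -/
private lemma deg1_nbr_deg3 (f : G.lineGraph ≃g cycleGraph (m+3)) {v w : V}
    (hvw : G.Adj v w) (hdeg1 : ∀ x, G.Adj v x → x = w) :
    ∃ x y, G.Adj w x ∧ G.Adj w y ∧ G.Adj w v ∧ x ≠ y ∧ x ≠ v ∧ y ≠ v := by
  set e : G.edgeSet := ⟨s(v, w), hvw⟩ with he
  obtain ⟨a, b, hab, hiff⟩ := two_line_nbrs f e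
  -- any line-neighbour of `e` is an edge through `w` not equal to `e`
  have key : ∀ c : G.edgeSet, G.lineGraph.Adj e c → ∃ x, G.Adj w x ∧ x ≠ v ∧ (c : Sym2 V) = s(w, x) := by
    intro c hc
    obtain ⟨hne, u, hu1, hu2⟩ := lineGraph_adj_iff_exists.mp hc
    have hu1' : u ∈ s(v, w) := hu1
    rw [Sym2.mem_iff] at hu1'
    rcases hu1' with rfl | rfl
    · -- shared vertex is v : impossible
      obtain ⟨x, hx, hcx⟩ := mem_edge c.2 hu2
      have : x = w := hdeg1 x hx
      subst this
      refine absurd (Subtype.ext ?_ : c = e) (Ne.symm hne)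
      rw [he]
      exact hcx
    · obtain ⟨x, hx, hcx⟩ := mem_edge c.2 hu2
      refine ⟨x, hx, ?_, hcx⟩
      rintro rfl
      apply Ne.symm hne
      apply Subtype.ext
      rw [hcx, he]
      exact Sym2.eq_swap
  have haa : G.lineGraph.Adj e a := (hiff a).mpr (Or.inl rfl)
  have hbb : G.lineGraph.Adj e b := (hiff b).mpr (Or.inr rfl)
  obtain ⟨x, hwx, hxv, hax⟩ := key a haa
  obtain ⟨y, hwy, hyv, hby⟩ := key b hbb
  refine ⟨x, y, hwx, hwy, hvw.symm, ?_, hxv, hyv⟩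
  rintro rfl
  exact hab (Subtype.ext (hax.trans hby.symm))

/-- if no vertex has three distinct neighbours, every vertex has exactly two neighbours. -/
private lemma exactly_two (f : G.lineGraph ≃g cycleGraph (m+3)) (hne : ∀ v, ∃ w, G.Adj v w)
    (h3 : ¬ ∃ v w₁ w₂ w₃, G.Adj v w₁ ∧ G.Adj v w₂ ∧ G.Adj v w₃ ∧ w₁ ≠ w₂ ∧ w₁ ≠ w₃ ∧ w₂ ≠ w₃) :
    ∀ v, ∃ w₁ w₂, w₁ ≠ w₂ ∧ G.Adj v w₁ ∧ G.Adj v w₂ ∧ ∀ x, G.Adj v x → x = w₁ ∨ x = w₂ := by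
  intro v
  obtain ⟨w, hw⟩ := hne v
  by_cases h2 : ∃ w₂, w₂ ≠ w ∧ G.Adj v w₂
  · obtain ⟨w₂, hne2, hw2⟩ := h2
    refine ⟨w, w₂, Ne.symm hne2, hw, hw2, ?_⟩
    intro x hx
    by_contra hcon
    push_neg at hcon
    exact h3 ⟨v, w, w₂, x, hw, hw2, hx, Ne.symm hne2, Ne.symm hcon.1, Ne.symm hcon.2⟩
  · push_neg at h2
    have hdeg1 : ∀ x, G.Adj v x → x = w := by
      intro x hx
      by_contra hxw
      exact hxw (h2 x (fun h => hxw h) |> absurd hx |> False.elim)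
    obtain ⟨x, y, hwx, hwy, hwv, hxy, hxv, hyv⟩ := deg1_nbr_deg3 f hw hdeg1
    exact absurd ⟨w, x, y, v, hwx, hwy, hwv, hxy, hxv, hyv⟩ h3

/-- in the 2-regular case, `G` is isomorphic to the cycle. -/
private lemma cyc_iso (f : G.lineGraph ≃g cycleGraph (m+3))
    (htwo : ∀ v, ∃ w₁ w₂, w₁ ≠ w₂ ∧ G.Adj v w₁ ∧ G.Adj v w₂ ∧
      ∀ x, G.Adj v x → x = w₁ ∨ x = w₂) :
    Nonempty (G ≃g cycleGraph (m+3)) := by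
  classical
  choose w₁ w₂ hw ha1 ha2 hall using htwo
  set e₁ : V → G.edgeSet := fun v => ⟨s(v, w₁ v), ha1 v⟩ with he₁
  set e₂ : V → G.edgeSet := fun v => ⟨s(v, w₂ v), ha2 v⟩ with he₂
  have hee : ∀ v, e₁ v ≠ e₂ v := fun v => edge_mk_ne (ha1 v) (ha2 v) (hw v)
  have hadj : ∀ v, G.lineGraph.Adj (e₁ v) (e₂ v) := fun v =>
    line_adj_of_shared (hee v) (Sym2.mem_mk_left _ _) (Sym2.mem_mk_left _ _)
  have hsub : ∀ v, f (e₁ v) - f (e₂ v) = 1 ∨ f (e₂ v) - f (e₁ v) = 1 := fun v =>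
    cyc_adj.mp (f.map_adj_iff.mpr (hadj v))
  set g : V → Fin (m+3) := fun v =>
    if f (e₁ v) - f (e₂ v) = 1 then f (e₁ v) else f (e₂ v) with hg
  have hpair : ∀ v, (f (e₁ v) = g v ∧ f (e₂ v) = g v - 1) ∨
      (f (e₂ v) = g v ∧ f (e₁ v) = g v - 1) := by
    intro v
    by_cases hc : f (e₁ v) - f (e₂ v) = 1
    · left
      have hgv : g v = f (e₁ v) := by rw [hg]; simp only [if_pos hc]
      exact ⟨hgv.symm, by rw [hgv]; linear_combination -hc⟩
    · right
      have hgv : g v = f (e₂ v) := by rw [hg]; simp only [if_neg hc]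
      have hc2 : f (e₂ v) - f (e₁ v) = 1 := (hsub v).resolve_left hc
      exact ⟨hgv.symm, by rw [hgv]; linear_combination -hc2⟩
  -- the key incidence characterisation
  have hkey : ∀ (v : V) (e : G.edgeSet), v ∈ (e : Sym2 V) ↔ (f e = g v ∨ f e = g v - 1) := by
    intro v e
    constructor
    · intro hv
      obtain ⟨x, hx, hex⟩ := mem_edge e.2 hv
      have : e = e₁ v ∨ e = e₂ v := by
        rcases hall v x hx with rfl | rfl
        · left; exact Subtype.ext (by rw [he₁]; exact hex)
        · right; exact Subtype.ext (by rw [he₂]; exact hex)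
      rcases this with rfl | rfl
      · rcases hpair v with ⟨h1, _⟩ | ⟨_, h1⟩
        · exact Or.inl h1
        · exact Or.inr h1
      · rcases hpair v with ⟨_, h2⟩ | ⟨h2, _⟩
        · exact Or.inr h2
        · exact Or.inl h2
    · intro hfe
      have : e = e₁ v ∨ e = e₂ v := by
        rcases hfe with hfe | hfe <;> rcases hpair v with ⟨h1, h2⟩ | ⟨h1, h2⟩
        · exact Or.inl (f.injective (hfe.trans h1.symm))
        · exact Or.inr (f.injective (hfe.trans h1.symm))
        · exact Or.inr (f.injective (hfe.trans h2.symm))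
        · exact Or.inl (f.injective (hfe.trans h2.symm))
      rcases this with rfl | rfl
      · rw [he₁]; exact Sym2.mem_mk_left _ _
      · rw [he₂]; exact Sym2.mem_mk_left _ _
  have hgne : ∀ v, g v ≠ g v - 1 := by
    intro v h
    exact fin_one_ne_zero (m := m) (by linear_combination h)
  -- injectivity
  have ginj : Function.Injective g := by
    intro v u hvu
    by_contra hne'
    have hv1 : v ∈ (f.symm (g v) : Sym2 V) := by
      rw [hkey]; left; exact f.apply_symm_apply _
    have hu1 : u ∈ (f.symm (g v) : Sym2 V) := by
      rw [hkey]; left; rw [hvu]; exact f.apply_symm_apply _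
    have hv2 : v ∈ (f.symm (g v - 1) : Sym2 V) := by
      rw [hkey]; right; exact f.apply_symm_apply _
    have hu2 : u ∈ (f.symm (g v - 1) : Sym2 V) := by
      rw [hkey]; right; rw [hvu]; exact f.apply_symm_apply _
    have hq1 : (f.symm (g v) : Sym2 V) = s(v, u) := (Sym2.mem_and_mem_iff hne').mp ⟨hv1, hu1⟩
    have hq2 : (f.symm (g v - 1) : Sym2 V) = s(v, u) := (Sym2.mem_and_mem_iff hne').mp ⟨hv2, hu2⟩
    have : f.symm (g v) = f.symm (g v - 1) := Subtype.ext (hq1.trans hq2.symm)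
    exact hgne v (f.symm.injective this)
  -- surjectivity
  have gsurj : Function.Surjective g := by
    intro j
    have hadj' : G.lineGraph.Adj (f.symm (j - 1)) (f.symm j) :=
      f.symm.map_adj_iff.mpr (cyc_adj.mpr (Or.inr (sub_sub_cancel j 1)))
    obtain ⟨_, v, hv1, hv2⟩ := lineGraph_adj_iff_exists.mp hadj'
    refine ⟨v, ?_⟩
    have k2 := (hkey v _).mp hv2
    rw [f.apply_symm_apply] at k2
    rcases k2 with k2 | k2
    · exact k2.symm
    · have k1 := (hkey v _).mp hv1
      rw [f.apply_symm_apply] at k1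
      rcases k1 with k1 | k1
      · exact absurd (show (2 : Fin (m+3)) = 0 by linear_combination k2 - k1)
          (fin_two_ne_zero (m := m))
      · have : j = g v := by linear_combination k1
        exact this.symm
  -- adjacency correspondence
  have gadj : ∀ v u, (cycleGraph (m+3)).Adj (g v) (g u) ↔ G.Adj v u := by
    intro v u
    constructor
    · intro h
      have hne' : g v ≠ g u := h.ne
      rw [cyc_adj] at h
      rcases h with h | h
      · -- g u = g v - 1
        have hv : v ∈ (f.symm (g v - 1) : Sym2 V) := by
          rw [hkey]; right; exact f.apply_symm_apply _
        have hu : u ∈ (f.symm (g v - 1) : Sym2 V) := by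
          rw [hkey]; left; rw [f.apply_symm_apply]; linear_combination h
        have hvu : v ≠ u := by rintro rfl; exact hne' rfl
        have := (Sym2.mem_and_mem_iff hvu).mp ⟨hv, hu⟩
        have hmem : s(v, u) ∈ G.edgeSet := this ▸ (f.symm (g v - 1)).2
        exact G.mem_edgeSet.mp hmem
      · have hv : v ∈ (f.symm (g u - 1) : Sym2 V) := by
          rw [hkey]; left; rw [f.apply_symm_apply]; linear_combination h
        have hu : u ∈ (f.symm (g u - 1) : Sym2 V) := by
          rw [hkey]; right; exact f.apply_symm_apply _
        have hvu : v ≠ u := by rintro rfl; exact hne' rfl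
        have := (Sym2.mem_and_mem_iff hvu).mp ⟨hv, hu⟩
        have hmem : s(v, u) ∈ G.edgeSet := this ▸ (f.symm (g u - 1)).2
        exact G.mem_edgeSet.mp hmem
    · intro h
      have hne' : g v ≠ g u := fun hh => h.ne (ginj hh)
      have hv : v ∈ ((⟨s(v, u), h⟩ : G.edgeSet) : Sym2 V) := Sym2.mem_mk_left _ _
      have hu : u ∈ ((⟨s(v, u), h⟩ : G.edgeSet) : Sym2 V) := Sym2.mem_mk_right _ _
      rw [hkey] at hv hu
      rw [cyc_adj]
      rcases hv with hv | hv <;> rcases hu with hu | hu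
      · exact absurd (hv.symm.trans hu) hne'
      · right; linear_combination hv - hu
      · left; linear_combination hu - hv
      · exact absurd (show g v = g u by linear_combination hu - hv) hne'
  exact ⟨⟨Equiv.ofBijective g ⟨ginj, gsurj⟩, fun {v u} => gadj v u⟩⟩

/-- around a degree-3 vertex: no fourth neighbour, and spokes' far ends have degree one. -/
private lemma star_facts (f : G.lineGraph ≃g cycleGraph (m+3)) {v w₁ w₂ w₃ : V}
    (h1 : G.Adj v w₁) (h2 : G.Adj v w₂) (h3 : G.Adj v w₃)
    (h12 : w₁ ≠ w₂) (h13 : w₁ ≠ w₃) (h23 : w₂ ≠ w₃) :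
    (∀ x, G.Adj v x → x = w₁ ∨ x = w₂ ∨ x = w₃) ∧ (∀ x, G.Adj w₁ x → x = v) := by
  obtain ⟨a, b, hab, hiff⟩ := two_line_nbrs f ⟨s(v, w₁), h1⟩
  have hE2 : G.lineGraph.Adj ⟨s(v, w₁), h1⟩ ⟨s(v, w₂), h2⟩ :=
    line_adj_of_shared (edge_mk_ne h1 h2 h12) (Sym2.mem_mk_left _ _) (Sym2.mem_mk_left _ _)
  have hE3 : G.lineGraph.Adj ⟨s(v, w₁), h1⟩ ⟨s(v, w₃), h3⟩ :=
    line_adj_of_shared (edge_mk_ne h1 h3 h13) (Sym2.mem_mk_left _ _) (Sym2.mem_mk_left _ _)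
  have m2 := (hiff _).mp hE2
  have m3 := (hiff _).mp hE3
  have hE23 : (⟨s(v, w₂), h2⟩ : G.edgeSet) ≠ ⟨s(v, w₃), h3⟩ := edge_mk_ne h2 h3 h23
  constructor
  · intro x hx
    by_contra hcon
    push_neg at hcon
    obtain ⟨hx1, hx2, hx3⟩ := hcon
    have hEx : G.lineGraph.Adj ⟨s(v, w₁), h1⟩ ⟨s(v, x), hx⟩ :=
      line_adj_of_shared (edge_mk_ne h1 hx (Ne.symm hx1)) (Sym2.mem_mk_left _ _)
        (Sym2.mem_mk_left _ _)
    have mx := (hiff _).mp hEx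
    exact three_ne hE23 (edge_mk_ne h2 hx (Ne.symm hx2))
      (edge_mk_ne h3 hx (Ne.symm hx3)) m2 m3 mx
  · intro x hx
    by_contra hxv
    have hxe : (⟨s(w₁, x), hx⟩ : G.edgeSet) ≠ ⟨s(v, w₁), h1⟩ := by
      intro hh
      have : s(w₁, x) = s(w₁, v) := (congrArg Subtype.val hh).trans Sym2.eq_swap
      exact hxv (Sym2.congr_right.mp this)
    have hEx : G.lineGraph.Adj ⟨s(v, w₁), h1⟩ ⟨s(w₁, x), hx⟩ :=
      line_adj_of_shared (Ne.symm hxe) (Sym2.mem_mk_right _ _) (Sym2.mem_mk_left _ _)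
    have mx := (hiff _).mp hEx
    have hne2 : (⟨s(v, w₂), h2⟩ : G.edgeSet) ≠ ⟨s(w₁, x), hx⟩ := by
      intro hh
      have hveq : s(v, w₂) = s(w₁, x) := congrArg Subtype.val hh
      have hv : v ∈ s(w₁, x) := by rw [← hveq]; exact Sym2.mem_mk_left v w₂
      rw [Sym2.mem_iff] at hv
      rcases hv with rfl | rfl
      · exact h1.ne rfl
      · exact hxv rfl
    have hne3 : (⟨s(v, w₃), h3⟩ : G.edgeSet) ≠ ⟨s(w₁, x), hx⟩ := by
      intro hh
      have hveq : s(v, w₃) = s(w₁, x) := congrArg Subtype.val hh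
      have hv : v ∈ s(w₁, x) := by rw [← hveq]; exact Sym2.mem_mk_left v w₃
      rw [Sym2.mem_iff] at hv
      rcases hv with rfl | rfl
      · exact h1.ne rfl
      · exact hxv rfl
    exact three_ne hE23 hne2 hne3 m2 m3 mx

private lemma star_iso (f : G.lineGraph ≃g cycleGraph (m+3)) (hconn : G.Connected)
    {v w₁ w₂ w₃ : V} (h1 : G.Adj v w₁) (h2 : G.Adj v w₂) (h3 : G.Adj v w₃)
    (h12 : w₁ ≠ w₂) (h13 : w₁ ≠ w₃) (h23 : w₂ ≠ w₃) :
    Nonempty (G ≃g completeBipartiteGraph (Fin 1) (Fin 3)) := by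
  obtain ⟨hv, hd1⟩ := star_facts f h1 h2 h3 h12 h13 h23
  obtain ⟨_, hd2⟩ := star_facts f h2 h1 h3 (Ne.symm h12) h23 h13
  obtain ⟨_, hd3⟩ := star_facts f h3 h1 h2 (Ne.symm h13) (Ne.symm h23) h12
  have aux : ∀ (P : V → Prop), (∀ a, P a → ∀ b, G.Adj a b → P b) →
      ∀ (x y : V), G.Walk x y → P x → P y := by
    intro P hP x y p
    induction p with
    | nil => exact id
    | cons ha _ ih => exact fun hx => ih (hP _ hx _ ha)
  have claim : ∀ x, x = v ∨ x = w₁ ∨ x = w₂ ∨ x = w₃ := by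
    intro x
    refine aux (fun y => y = v ∨ y = w₁ ∨ y = w₂ ∨ y = w₃) ?_ v x
      (hconn.preconnected v x).some (Or.inl rfl)
    rintro a (rfl | rfl | rfl | rfl) b hab
    · rcases hv b hab with rfl | rfl | rfl
      · exact Or.inr (Or.inl rfl)
      · exact Or.inr (Or.inr (Or.inl rfl))
      · exact Or.inr (Or.inr (Or.inr rfl))
    · exact Or.inl (hd1 b hab)
    · exact Or.inl (hd2 b hab)
    · exact Or.inl (hd3 b hab)
  let φ : (Fin 1 ⊕ Fin 3) → V := Sum.elim (fun _ => v) (![w₁, w₂, w₃])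
  have hφ0 : ∀ i : Fin 1, φ (Sum.inl i) = v := fun _ => rfl
  have hadjφ : ∀ i : Fin 3, G.Adj v (φ (Sum.inr i)) := by
    intro i
    fin_cases i
    · exact h1
    · exact h2
    · exact h3
  have hdφ : ∀ i : Fin 3, ∀ x, G.Adj (φ (Sum.inr i)) x → x = v := by
    intro i
    fin_cases i
    · exact hd1
    · exact hd2
    · exact hd3
  have hφne : ∀ i j : Fin 3, i ≠ j → φ (Sum.inr i) ≠ φ (Sum.inr j) := by
    intro i j hij
    fin_cases i <;> fin_cases j <;>
      first
        | exact absurd rfl hij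
        | exact h12 | exact h13 | exact h23
        | exact Ne.symm h12 | exact Ne.symm h13 | exact Ne.symm h23
  have hinj : Function.Injective φ := by
    rintro (i | i) (j | j) hij
    · exact congrArg Sum.inl (Subsingleton.elim i j)
    · have := hadjφ j
      rw [← hij, hφ0 i] at this
      exact absurd this (G.irrefl)
    · have := hadjφ i
      rw [hij, hφ0 j] at this
      exact absurd this (G.irrefl)
    · by_contra hne'
      have : i ≠ j := fun hh => hne' (congrArg Sum.inr hh)
      exact hφne i j this hij
  have hsurj : Function.Surjective φ := by
    intro x
    rcases claim x with rfl | rfl | rfl | rfl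
    · exact ⟨Sum.inl 0, rfl⟩
    · exact ⟨Sum.inr 0, rfl⟩
    · exact ⟨Sum.inr 1, rfl⟩
    · exact ⟨Sum.inr 2, rfl⟩
  have hmaps : ∀ a b, G.Adj (φ a) (φ b) ↔
      (completeBipartiteGraph (Fin 1) (Fin 3)).Adj a b := by
    rintro (i | i) (j | j)
    · rw [hφ0 i, hφ0 j]
      simp [completeBipartiteGraph_adj, G.irrefl (v := v)]
    · rw [hφ0 i]
      simpa using hadjφ j
    · rw [hφ0 j]
      simpa using (hadjφ i).symm
    · suffices h : ¬ G.Adj (φ (Sum.inr i)) (φ (Sum.inr j)) by simpa using h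
      intro hh
      have := hdφ i _ hh
      exact (hadjφ j).ne (this ▸ rfl)
  exact ⟨(RelIso.mk (Equiv.ofBijective φ ⟨hinj, hsurj⟩) (fun {a b} => hmaps a b)).symm⟩

private lemma main_dichotomy (f : G.lineGraph ≃g cycleGraph (m+3)) (hne : ∀ v, ∃ w, G.Adj v w) :
    Nonempty (G ≃g cycleGraph (m+3)) ∨
      (m = 0 ∧ ∃ v w₁ w₂ w₃, G.Adj v w₁ ∧ G.Adj v w₂ ∧ G.Adj v w₃ ∧
        w₁ ≠ w₂ ∧ w₁ ≠ w₃ ∧ w₂ ≠ w₃) := by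
  by_cases h3 : ∃ v w₁ w₂ w₃, G.Adj v w₁ ∧ G.Adj v w₂ ∧ G.Adj v w₃ ∧
      w₁ ≠ w₂ ∧ w₁ ≠ w₃ ∧ w₂ ≠ w₃
  · right
    obtain ⟨v, w₁, w₂, w₃, a1, a2, a3, d12, d13, d23⟩ := h3
    exact ⟨deg3_m_eq_zero f a1 a2 a3 d12 d13 d23,
      v, w₁, w₂, w₃, a1, a2, a3, d12, d13, d23⟩
  · left
    exact cyc_iso f (exactly_two f hne h3)

end Aux

/-- For every `n ≥ 3`, the cycle `C_n` is the only connected simple graph without isolated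
vertices, other than possibly `K_{1,3}` when `n = 3`, whose line graph is isomorphic to `C_n`.
In particular, for `n = 5`: `C_5` is the only iso-free graph whose line graph is `C_5`. -/
theorem cycleGraph_unique_lineGraph :
    (∀ (n : ℕ), 3 ≤ n → ∀ {V : Type} (G : SimpleGraph V), G.Connected →
      (∀ v, ∃ w, G.Adj v w) → Nonempty (G.lineGraph ≃g cycleGraph n) →
      Nonempty (G ≃g cycleGraph n) ∨
        (n = 3 ∧ Nonempty (G ≃g completeBipartiteGraph (Fin 1) (Fin 3)))) ∧
    (∀ {V : Type} (G : SimpleGraph V), (∀ v, ∃ w, G.Adj v w) →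
      Nonempty (G.lineGraph ≃g cycleGraph 5) → Nonempty (G ≃g cycleGraph 5)) := by
  constructor
  · intro n hn V G hconn hne hiso
    obtain ⟨m, rfl⟩ : ∃ m, n = m + 3 := ⟨n - 3, by omega⟩
    obtain ⟨f⟩ := hiso
    rcases main_dichotomy f hne with h | ⟨rfl, v, w₁, w₂, w₃, a1, a2, a3, d12, d13, d23⟩
    · exact Or.inl h
    · exact Or.inr ⟨rfl, star_iso f hconn a1 a2 a3 d12 d13 d23⟩
  · intro V G hne hiso
    obtain ⟨f⟩ := hiso
    have f' : G.lineGraph ≃g cycleGraph (2+3) := f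
    rcases main_dichotomy f' hne with h | ⟨h0, _⟩
    · exact h
    · exact absurd h0 (by omega)
end

section
/- A simple graph G is line perfect (i.e., its line graph L(G) is a perfect graph) if and only if G contains no odd cycle of length at least 5 as a subgraph. -/
open SimpleGraph

/-- A graph is perfect if every induced subgraph has chromatic number equal to its
clique number. -/
def SimpleGraph.IsPerfect {V : Type*} (H : SimpleGraph V) : Prop :=
  ∀ s : Set V, (H.induce s).chromaticNumber = ((H.induce s).cliqueNum : ℕ∞)

/-- `G` contains `H` as a (not necessarily induced) subgraph. -/
def ContainsSub {V W : Type*} (G : SimpleGraph V) (H : SimpleGraph W) : Prop :=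
  ∃ f : W → V, Function.Injective f ∧ ∀ a b, H.Adj a b → G.Adj (f a) (f b)

namespace Trotter

variable {V : Type}

/-- Proper edge coloring -/
def Proper (H : SimpleGraph V) (c : Sym2 V → ℕ) : Prop :=
  ∀ ⦃w a b⦄, H.Adj w a → H.Adj w b → a ≠ b → c s(w,a) ≠ c s(w,b)

def NoLongOdd (H : SimpleGraph V) : Prop :=
  ∀ n : ℕ, 5 ≤ n → Odd n → ¬ ContainsSub H (cycleGraph n)

lemma containsSub_mono {W : Type*} {G G' : SimpleGraph V} {C : SimpleGraph W}
    (h : G ≤ G') (hc : ContainsSub G C) : ContainsSub G' C := by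
  obtain ⟨f, hf, hadj⟩ := hc
  exact ⟨f, hf, fun a b hab => h (hadj a b hab)⟩

lemma NoLongOdd.mono {G G' : SimpleGraph V} (h : G ≤ G') (hn : NoLongOdd G') :
    NoLongOdd G := fun n h5 ho hc => hn n h5 ho (containsSub_mono h hc)

lemma containsSub_cycleGraph {n : ℕ} [NeZero n] (hn : 2 ≤ n) {H : SimpleGraph V} (f : Fin n → V)
    (hinj : Function.Injective f) (hadj : ∀ i : Fin n, H.Adj (f i) (f (i + 1))) :
    ContainsSub H (cycleGraph n) := by
  refine ⟨f, hinj, ?_⟩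
  intro a b hab
  obtain ⟨m, rfl⟩ : ∃ m, n = m + 2 := ⟨n - 2, by omega⟩
  rw [cycleGraph_adj] at hab
  rcases hab with h | h
  · have hh : a = b + 1 := by rw [sub_eq_iff_eq_add] at h; rw [h]; exact add_comm _ _
    subst hh
    exact (hadj b).symm
  · have hh : b = a + 1 := by rw [sub_eq_iff_eq_add] at h; rw [h]; exact add_comm _ _
    subst hh
    exact hadj a

lemma getVert_inj {K : SimpleGraph V} {u v : V} {p : K.Walk u v} (hp : p.IsPath) :
    ∀ i j, i ≤ p.length → j ≤ p.length → p.getVert i = p.getVert j → i = j := by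
  induction p with
  | nil => intro i j hi hj _; simp_all
  | @cons a b w h q ih =>
    intro i j hi hj hij
    have hq := hp.of_cons
    have hb : a ∉ q.support := (SimpleGraph.Walk.cons_isPath_iff _ _).mp hp |>.2
    match i, j with
    | 0, 0 => rfl
    | 0, (j+1) =>
      exfalso
      apply hb
      rw [SimpleGraph.Walk.mem_support_iff_exists_getVert]
      refine ⟨j, ?_, ?_⟩
      · simpa [SimpleGraph.Walk.getVert_zero] using hij.symm
      · simpa using hj
    | (i+1), 0 =>
      exfalso
      apply hb
      rw [SimpleGraph.Walk.mem_support_iff_exists_getVert]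
      refine ⟨i, ?_, ?_⟩
      · simpa [SimpleGraph.Walk.getVert_zero] using hij
      · simpa using hi
    | (i+1), (j+1) =>
      have := ih hq i j (by simpa using hi) (by simpa using hj)
        (by simpa [SimpleGraph.Walk.getVert_cons_succ] using hij)
      omega

lemma cy1 {K H : SimpleGraph V} (hKH : K ≤ H) {u v : V} (p : K.Walk u v)
    (hp : p.IsPath) (h1 : 1 ≤ p.length) (huv : H.Adj v u) :
    ContainsSub H (cycleGraph (p.length + 1)) := by
  have h2 : 2 ≤ p.length + 1 := by omega
  refine containsSub_cycleGraph h2 (fun i : Fin (p.length + 1) => p.getVert i.val) ?_ ?_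
  · intro i j hij
    exact Fin.ext (getVert_inj hp i.val j.val (by omega) (by omega) hij)
  · intro i
    show H.Adj (p.getVert i.val) (p.getVert ((i + 1 : Fin (p.length + 1))).val)
    rcases lt_or_eq_of_le (Nat.lt_succ_iff.mp i.isLt) with h | h
    · have hv : ((i + 1 : Fin (p.length + 1))).val = i.val + 1 :=
        Fin.val_add_one_of_lt (by rw [Fin.lt_iff_val_lt_val]; simpa using h)
      rw [hv]
      exact hKH (p.adj_getVert_succ h)
    · have hi : i = Fin.last p.length := Fin.ext (by simpa [Fin.last] using h)
      have h0 : (i + 1 : Fin (p.length + 1)) = 0 := by rw [hi]; simp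
      rw [h0, hi]
      simp only [Fin.val_last, Fin.val_zero, SimpleGraph.Walk.getVert_length,
        SimpleGraph.Walk.getVert_zero]
      exact huv

lemma cy2 {K H : SimpleGraph V} (hKH : K ≤ H) {u v : V} (p : K.Walk u v)
    (hp : p.IsPath) (h1 : 1 ≤ p.length) {x : V} (hx : x ∉ p.support)
    (hvx : H.Adj v x) (hxu : H.Adj x u) :
    ContainsSub H (cycleGraph (p.length + 2)) := by
  classical
  set n := p.length + 2 with hn
  have h2 : 2 ≤ n := by omega
  refine containsSub_cycleGraph h2
    (fun i : Fin n => if i.val ≤ p.length then p.getVert i.val else x) ?_ ?_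
  · intro i j hij
    by_cases hi : i.val ≤ p.length <;> by_cases hj : j.val ≤ p.length <;>
      simp only [hi, hj, if_pos, if_neg, if_true, if_false] at hij
    · exact Fin.ext (getVert_inj hp i.val j.val hi hj hij)
    · exact absurd (SimpleGraph.Walk.mem_support_iff_exists_getVert.mpr ⟨i.val, hij, hi⟩) hx
    · exact absurd (SimpleGraph.Walk.mem_support_iff_exists_getVert.mpr ⟨j.val, hij.symm, hj⟩) hx
    · exact Fin.ext (by omega)
  · intro i
    show H.Adj _ _
    have hilt : i.val < n := i.isLt
    rcases Nat.lt_or_ge i.val p.length with h | h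
    · have hv : ((i + 1 : Fin n)).val = i.val + 1 :=
        Fin.val_add_one_of_lt (by rw [Fin.lt_iff_val_lt_val]; simp [Fin.last, hn]; omega)
      simp only [hv, if_pos (by omega : i.val ≤ p.length), if_pos (by omega : i.val + 1 ≤ p.length)]
      exact hKH (p.adj_getVert_succ h)
    · rcases Nat.lt_or_ge i.val (p.length + 1) with h' | h'
      · -- i.val = p.length
        have he : i.val = p.length := by omega
        have hv : ((i + 1 : Fin n)).val = i.val + 1 :=
          Fin.val_add_one_of_lt (by rw [Fin.lt_iff_val_lt_val]; simp [Fin.last, hn]; omega)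
        simp only [hv, if_pos (by omega : i.val ≤ p.length),
          if_neg (by omega : ¬ i.val + 1 ≤ p.length), he, SimpleGraph.Walk.getVert_length]
        simpa using hvx
      · -- i.val = p.length + 1 = n - 1
        have he : i.val = p.length + 1 := by omega
        have hi : i = Fin.last (p.length + 1) := Fin.ext (by simpa [Fin.last] using he)
        have h0 : (i + 1 : Fin n) = 0 := by rw [hi]; exact Fin.last_add_one _
        rw [h0]
        simp only [if_neg (by omega : ¬ i.val ≤ p.length), Fin.val_zero,
          if_pos (by omega : 0 ≤ p.length), SimpleGraph.Walk.getVert_zero]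
        exact hxu

def Miss (H : SimpleGraph V) (c : Sym2 V → ℕ) (w : V) (a : ℕ) : Prop :=
  ∀ z, H.Adj w z → c s(w,z) ≠ a

lemma unique_color {H : SimpleGraph V} {c : Sym2 V → ℕ} (hc : Proper H c) {w a b : V}
    (h1 : H.Adj w a) (h2 : H.Adj w b) (he : c s(w,a) = c s(w,b)) : a = b := by
  by_contra hne
  exact hc h1 h2 hne he

def chainG (H : SimpleGraph V) (c : Sym2 V → ℕ) (α γ : ℕ) : SimpleGraph V where
  Adj a b := H.Adj a b ∧ (c s(a,b) = α ∨ c s(a,b) = γ)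
  symm := by
    refine ⟨?_⟩
    intro a b ⟨h1, h2⟩
    exact ⟨h1.symm, by rwa [Sym2.eq_swap]⟩
  loopless := ⟨fun a h => H.loopless.irrefl a h.1⟩

lemma chainG_le {H : SimpleGraph V} {c : Sym2 V → ℕ} {α γ : ℕ} : chainG H c α γ ≤ H :=
  fun _ _ h => h.1

lemma chainG_adj {H : SimpleGraph V} {c : Sym2 V → ℕ} {α γ : ℕ} {a b : V} :
    (chainG H c α γ).Adj a b ↔ H.Adj a b ∧ (c s(a,b) = α ∨ c s(a,b) = γ) := Iff.rfl

lemma chain_parity {H : SimpleGraph V} {c : Sym2 V → ℕ} {α γ : ℕ}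
    (hc : Proper H c) {b : V} (hb : Miss H c b γ) :
    ∀ {a a'} (h : (chainG H c α γ).Adj a a') (q : (chainG H c α γ).Walk a' b),
      (SimpleGraph.Walk.cons h q).IsPath → (Odd (q.length + 1) ↔ c s(a,a') = α) := by
  intro a a' h q
  induction q generalizing a with
  | nil =>
    intro _
    simp only [SimpleGraph.Walk.length_nil, zero_add]
    have h2 := h.2
    have hγ := hb a h.1.symm
    rw [Sym2.eq_swap] at hγ
    constructor
    · intro _; tauto
    · intro _; exact odd_one
  | @cons a' a'' bb h' q' ih =>
    intro hp
    have hp' : (SimpleGraph.Walk.cons h' q').IsPath := hp.of_cons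
    have iha := ih hb h' hp'
    -- a ≠ a''
    have hane : a ≠ a'' := by
      intro hcon
      have : a ∈ (SimpleGraph.Walk.cons h' q').support := by
        rw [hcon]
        rw [SimpleGraph.Walk.support_cons]
        exact List.mem_cons_of_mem _ q'.start_mem_support
      exact ((SimpleGraph.Walk.cons_isPath_iff _ _).mp hp).2 this
    have hcol : c s(a, a') ≠ c s(a', a'') := by
      intro hcon
      have := unique_color hc h.1.symm h'.1 (by rwa [Sym2.eq_swap] at hcon)
      exact hane this
    have h2 := h.2
    have h'2 := h'.2
    simp only [SimpleGraph.Walk.length_cons]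
    constructor
    · intro hodd
      have : ¬ Odd (q'.length + 1) := by
        rcases hodd with ⟨m, hm⟩
        intro ⟨m', hm'⟩
        omega
      have : c s(a', a'') ≠ α := fun hcc => this (iha.mpr hcc)
      have ha'' : c s(a', a'') = γ := by tauto
      rw [ha''] at hcol
      tauto
    · intro hα
      have : c s(a', a'') ≠ α := by rw [hα] at hcol; tauto
      have : ¬ Odd (q'.length + 1) := fun ho => this (iha.mp ho)
      rcases Nat.even_or_odd (q'.length + 1) with he | ho
      · rcases he with ⟨m, hm⟩
        exact ⟨m, by omega⟩
      · exact absurd ho this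

lemma reach_structure {H' H : SimpleGraph V} {c : Sym2 V → ℕ} {α β : ℕ} {u v : V}
    (hH : H' ≤ H) (hno : NoLongOdd H) (hc : Proper H' c)
    (huv : H.Adj u v)
    (hu : Miss H' c u α) (hv : Miss H' c v β)
    (hr : (chainG H' c α β).Reachable u v) :
    ∃ x, H'.Adj u x ∧ H'.Adj x v ∧ c s(u,x) = β ∧ c s(x,v) = α := by
  classical
  have hKH : chainG H' c α β ≤ H := le_trans chainG_le hH
  obtain ⟨w⟩ := hr
  obtain ⟨q, hp⟩ := w.toPath
  clear w
  cases q with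
  | nil => exact absurd huv (H.loopless.irrefl u)
  | cons h q' =>
    rename_i x
    have parity := chain_parity (α := α) (γ := β) hc hv h q' hp
    have hfirst : c s(u, x) ≠ α := hu x h.1
    have hnodd : ¬ Odd (q'.length + 1) := fun ho => hfirst (parity.mp ho)
    cases q' with
    | nil => simp only [SimpleGraph.Walk.length_nil] at hnodd; exact absurd odd_one hnodd
    | cons h2 q'' =>
      rename_i y
      cases q'' with
      | nil =>
        refine ⟨x, h.1, h2.1, ?_, ?_⟩
        · rcases h.2 with hh | hh
          · exact absurd hh hfirst
          · exact hh
        · have := hv x h2.1.symm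
          rw [Sym2.eq_swap] at this
          rcases h2.2 with hh | hh
          · exact hh
          · exact absurd hh this
      | cons h3 q''' =>
        exfalso
        have hcyc := cy1 hKH
          (SimpleGraph.Walk.cons h (SimpleGraph.Walk.cons h2 (SimpleGraph.Walk.cons h3 q''')))
          hp (by simp) huv.symm
        simp only [SimpleGraph.Walk.length_cons] at hcyc hnodd
        rcases Nat.even_or_odd q'''.length with he | ho
        · exact hnodd (by rcases he with ⟨m, hm⟩; exact ⟨m + 1, by omega⟩)
        · rcases ho with ⟨m, hm⟩
          exact hno (q'''.length + 1 + 1 + 1 + 1) (by omega) ⟨m + 2, by omega⟩ hcyc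

open scoped Classical in
/-- Swap colors `α`,`γ` on the Kempe chain component of `u`. -/
noncomputable def swapc (H' : SimpleGraph V) (c : Sym2 V → ℕ) (α γ : ℕ) (u : V) :
    Sym2 V → ℕ :=
  fun e => if (e ∈ (chainG H' c α γ).edgeSet ∧ ∃ w ∈ e, (chainG H' c α γ).Reachable u w)
    then (if c e = α then γ else α) else c e

lemma swap_package {H' : SimpleGraph V} {c : Sym2 V → ℕ} {α γ : ℕ} (hαγ : α ≠ γ)
    (hc : Proper H' c) {u v : V} (hu : Miss H' c u α)
    (hnr : ¬ (chainG H' c α γ).Reachable u v) :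
    ∃ c₂ : Sym2 V → ℕ,
      Proper H' c₂ ∧
      (∀ e, c₂ e = c e ∨ c₂ e = α ∨ c₂ e = γ) ∧
      Miss H' c₂ u γ ∧
      (∀ z, H'.Adj v z → c₂ s(v,z) = c s(v,z)) := by
  classical
  set K := chainG H' c α γ with hK
  set R : Set V := {w | K.Reachable u w} with hR
  set c₂ := swapc H' c α γ u with hc₂
  have hS1 : ∀ a b : V, (s(a,b) ∈ K.edgeSet ∧ ∃ w ∈ s(a,b), K.Reachable u w) →
      H'.Adj a b ∧ (c s(a,b) = α ∨ c s(a,b) = γ) ∧ a ∈ R ∧ b ∈ R := by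
    rintro a b ⟨he, w, hw, hwR⟩
    have hadj : K.Adj a b := he
    have hcolor := hadj.2
    have hwab : w = a ∨ w = b := Sym2.mem_iff.mp hw
    have haR : a ∈ R := by
      rcases hwab with rfl | rfl
      · exact hwR
      · exact hwR.trans hadj.symm.reachable
    have hbR : b ∈ R := haR.trans hadj.reachable
    exact ⟨hadj.1, hcolor, haR, hbR⟩
  have hS2 : ∀ a b : V, H'.Adj a b → a ∈ R → (c s(a,b) = α ∨ c s(a,b) = γ) →
      (s(a,b) ∈ K.edgeSet ∧ ∃ w ∈ s(a,b), K.Reachable u w) := by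
    intro a b hab haR hcol
    exact ⟨(⟨hab, hcol⟩ : K.Adj a b), a, Sym2.mem_mk_left a b, haR⟩
  have hval : ∀ e, c₂ e = c e ∨ c₂ e = α ∨ c₂ e = γ := by
    intro e
    rw [hc₂]
    unfold swapc
    split_ifs <;> tauto
  have hvedge : ∀ z, H'.Adj v z → c₂ s(v,z) = c s(v,z) := by
    intro z hz
    rw [hc₂]
    unfold swapc
    rw [if_neg]
    intro hmem
    exact hnr ((hS1 v z hmem).2.2.1)
  refine ⟨c₂, ?_, hval, ?_, hvedge⟩
  · -- properness
    intro w a b h1 h2 hne heq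
    have horig := hc h1 h2 hne
    by_cases m1 : (s(w,a) ∈ K.edgeSet ∧ ∃ x ∈ s(w,a), K.Reachable u x) <;>
      by_cases m2 : (s(w,b) ∈ K.edgeSet ∧ ∃ x ∈ s(w,b), K.Reachable u x)
    · obtain ⟨_, hcol1, _, _⟩ := hS1 w a m1
      obtain ⟨_, hcol2, _, _⟩ := hS1 w b m2
      rw [hc₂] at heq
      unfold swapc at heq
      rw [if_pos m1, if_pos m2] at heq
      rcases hcol1 with hx | hx <;> rcases hcol2 with hy | hy
      · exact horig (hx.trans hy.symm)
      · rw [if_pos hx, if_neg (by rw [hy]; exact Ne.symm hαγ)] at heq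
        exact hαγ heq.symm
      · rw [if_neg (by rw [hx]; exact Ne.symm hαγ), if_pos hy] at heq
        exact hαγ heq
      · exact horig (hx.trans hy.symm)
    · obtain ⟨_, hcol1, hwR, _⟩ := hS1 w a m1
      by_cases hcol2 : (c s(w,b) = α ∨ c s(w,b) = γ)
      · exact m2 (hS2 w b h2 hwR hcol2)
      · push_neg at hcol2
        rw [hc₂] at heq
        unfold swapc at heq
        rw [if_pos m1, if_neg m2] at heq
        rcases hcol1 with hx | hx
        · rw [if_pos hx] at heq; exact hcol2.2 heq.symm
        · rw [if_neg (hx ▸ (Ne.symm hαγ) : ¬ c s(w,a) = α)] at heq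
          exact hcol2.1 heq.symm
    · obtain ⟨_, hcol2, hwR, _⟩ := hS1 w b m2
      by_cases hcol1 : (c s(w,a) = α ∨ c s(w,a) = γ)
      · exact m1 (hS2 w a h1 hwR hcol1)
      · push_neg at hcol1
        rw [hc₂] at heq
        unfold swapc at heq
        rw [if_neg m1, if_pos m2] at heq
        rcases hcol2 with hx | hx
        · rw [if_pos hx] at heq; exact hcol1.2 heq
        · rw [if_neg (hx ▸ (Ne.symm hαγ) : ¬ c s(w,b) = α)] at heq
          exact hcol1.1 heq
    · rw [hc₂] at heq
      unfold swapc at heq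
      rw [if_neg m1, if_neg m2] at heq
      exact horig heq
  · -- Miss c₂ u γ
    intro z hz heq
    by_cases m : (s(u,z) ∈ K.edgeSet ∧ ∃ x ∈ s(u,z), K.Reachable u x)
    · rw [hc₂] at heq
      unfold swapc at heq
      rw [if_pos m, if_neg (hu z hz)] at heq
      exact hαγ heq
    · rw [hc₂] at heq
      unfold swapc at heq
      rw [if_neg m] at heq
      exact m (hS2 u z hz (SimpleGraph.Reachable.refl u) (Or.inr heq))

lemma chainG_comm {H : SimpleGraph V} {c : Sym2 V → ℕ} {α γ : ℕ} :
    chainG H c α γ = chainG H c γ α := by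
  ext a b
  show H.Adj a b ∧ _ ↔ H.Adj a b ∧ _
  tauto

/-- An edge of a path containing the start vertex must be the first edge. -/
lemma start_edge {K : SimpleGraph V} {v b : V} {h0 : K.Adj v b} {r' : K.Walk b w}
    (hp : (SimpleGraph.Walk.cons h0 r').IsPath) {t : V}
    (he : s(v, t) ∈ (SimpleGraph.Walk.cons h0 r').edges) : t = b := by
  rw [SimpleGraph.Walk.edges_cons] at he
  rcases List.mem_cons.mp he with he | he
  · exact Sym2.congr_right.mp he
  · exfalso
    exact ((SimpleGraph.Walk.cons_isPath_iff _ _).mp hp).2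
      (r'.fst_mem_support_of_mem_edges he)

lemma lemmaC {H' H : SimpleGraph V} (hH : H' ≤ H) (hno : NoLongOdd H)
    {c : Sym2 V → ℕ} (hc : Proper H' c) {α β γ : ℕ}
    (hαβ : α ≠ β) (hαγ : α ≠ γ) (hβγ : β ≠ γ)
    {u v x : V} (huv : H.Adj u v) (hnuv : ¬ H'.Adj u v)
    (hu : Miss H' c u α)
    (hux : H'.Adj u x) (hxv : H'.Adj x v)
    (hcux : c s(u,x) = β) (hcxv : c s(x,v) = α)
    (hr : (chainG H' c α γ).Reachable u v) : False := by
  classical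
  rw [chainG_comm] at hr
  set K := chainG H' c γ α with hKdef
  have hKH' : K ≤ H' := chainG_le
  have hKH : K ≤ H := le_trans hKH' hH
  have hr' : K.Reachable v u := hr.symm
  obtain ⟨w0⟩ := hr'
  obtain ⟨r, hp⟩ := w0.toPath
  clear w0
  cases r with
  | nil => exact absurd huv (H.loopless.irrefl u)
  | cons h0 r' =>
    rename_i z
    have parity := chain_parity (α := γ) (γ := α) hc hu h0 r' hp
    rcases h0.2 with hd | hd
    · -- first edge colored γ : Odd r.length
      have hodd : Odd (r'.length + 1) := parity.mpr hd
      -- exclude length 1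
      cases r' with
      | nil => exact hnuv h0.1.symm
      | cons h1 r'' =>
        rename_i z2
        -- length ≥ 2; odd so ≥ 3
        have hlen : 1 ≤ r''.length + 1 + 1 := by omega
        have hodd' : Odd (r''.length + 2) := by
          simpa [SimpleGraph.Walk.length_cons] using hodd
        -- full path r, from v to u, odd length ≥ 3
        set r : K.Walk v u := SimpleGraph.Walk.cons h0 (SimpleGraph.Walk.cons h1 r'') with hrdef
        have hrlen : r.length = r''.length + 2 := by simp [hrdef]
        have hrlen3 : 3 ≤ r.length := by
          rcases hodd' with ⟨m, hm⟩
          omega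
        -- x not in support of r
        have hxsupp : x ∉ r.support := by
          intro hx
          have hxu : x ≠ u := (H'.ne_of_adj hux).symm
          have hxv' : x ≠ v := H'.ne_of_adj (hxv)
          -- split r at x
          have hq := r.take_spec hx
          set q1 := r.takeUntil x hx with hq1def
          set q2 := r.dropUntil x hx with hq2def
          have hq1p : q1.IsPath := hp.takeUntil hx
          have hq2p : q2.IsPath := hp.dropUntil hx
          -- q1 ends at x with an edge; q2 starts at x with an edge
          have hq1len : q1.length ≠ 0 := fun hz =>
            hxv' (SimpleGraph.Walk.eq_of_length_eq_zero hz).symm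
          have hq2len : q2.length ≠ 0 := fun hz =>
            hxu (SimpleGraph.Walk.eq_of_length_eq_zero hz)
          -- edges of r are q1 ++ q2, nodup
          have hnodup : (q1.edges ++ q2.edges).Nodup := by
            rw [← SimpleGraph.Walk.edges_append, hq]
            exact hp.isTrail.edges_nodup
          have hdisj := List.disjoint_of_nodup_append hnodup
          -- r.edges = q1.edges ++ q2.edges
          have hmemr : ∀ e ∈ q1.edges, e ∈ r.edges := by
            intro e he
            rw [← hq, SimpleGraph.Walk.edges_append]
            exact List.mem_append_left _ he
          have hmemr2 : ∀ e ∈ q2.edges, e ∈ r.edges := by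
            intro e he
            rw [← hq, SimpleGraph.Walk.edges_append]
            exact List.mem_append_right _ he
          -- any r-edge through v is the first edge s(v,z), colored γ ≠ α
          have hvedge : ∀ t, s(v, t) ∈ r.edges → c s(v,t) ≠ α := by
            intro t ht
            have := start_edge (h0 := h0) (by rw [hrdef] at hp; exact hp)
              (by rw [hrdef] at ht; exact ht)
            subst this
            rw [hd]
            exact (Ne.symm hαγ)
          cases hq1r : q1.reverse with
          | nil =>
            apply hq1len
            have := congrArg SimpleGraph.Walk.length hq1r
            simpa using this
          | cons ha1 q1r' =>
            rename_i w1
            cases hq2c : q2 with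
            | nil =>
              apply hq2len
              rw [hq2c]
              rfl
            | cons ha2 q2' =>
              rename_i w2
              have he1 : s(x, w1) ∈ q1.edges := by
                have h5 : s(x, w1) ∈ q1.reverse.edges := by
                  rw [hq1r, SimpleGraph.Walk.edges_cons]
                  exact List.mem_cons_self
                rwa [SimpleGraph.Walk.edges_reverse, List.mem_reverse] at h5
              have he2 : s(x, w2) ∈ q2.edges := by
                rw [hq2c, SimpleGraph.Walk.edges_cons]
                exact List.mem_cons_self
              have hw12 : w1 ≠ w2 := by
                intro hcon
                subst hcon
                exact hdisj he1 he2
              have hne12 : c s(x, w1) ≠ c s(x, w2) := hc ha1.1 ha2.1 hw12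
              rcases ha1.2 with hcc | hcc
              · rcases ha2.2 with hdd | hdd
                · exact hne12 (hcc.trans hdd.symm)
                · -- c s(x,w2) = α : w2 = v
                  have hwv : w2 = v := unique_color hc ha2.1 hxv (hdd.trans hcxv.symm)
                  subst hwv
                  apply hvedge x
                  · rw [Sym2.eq_swap]
                    exact hmemr2 _ he2
                  · rwa [Sym2.eq_swap]
              · -- c s(x,w1) = α : w1 = v
                have hwv : w1 = v := unique_color hc ha1.1 hxv (hcc.trans hcxv.symm)
                subst hwv
                apply hvedge x
                · rw [Sym2.eq_swap]
                  exact hmemr _ he1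
                · rwa [Sym2.eq_swap]
        -- build the odd cycle v → ... → u → ? no: r + (u x) (x v)
        have hcyc := cy2 hKH r hp (by omega) hxsupp (hH hux) (hH hxv)
        rcases hodd' with ⟨m, hm⟩
        exact hno (r.length + 2) (by omega) ⟨m + 1, by omega⟩ hcyc
    · -- first edge colored α : z = x
      have hzx : z = x := by
        have hvx : H'.Adj v x := hxv.symm
        have hcvx : c s(v, x) = α := by rwa [Sym2.eq_swap] at hcxv
        exact unique_color hc h0.1 hvx (hd.trans hcvx.symm)
      subst hzx
      have hnodd : ¬ Odd (r'.length + 1) := fun ho => hαγ ((parity.mp ho).symm.trans hd).symm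
      cases r' with
      | nil => exact absurd odd_one hnodd
      | cons h1 r'' =>
        rename_i z2
        cases r'' with
        | nil =>
          -- single edge x-u in chain has color β : contradiction
          have := h1.2
          rw [Sym2.eq_swap] at this
          rcases this with hcc | hcc
          · exact hβγ (hcux.symm.trans hcc)
          · exact hαβ (hcux.symm.trans hcc).symm
        | cons h2 r''' =>
          -- r.length = r'''.length + 3 ≥ 3, total even
          have hr3 : ¬ Odd (r'''.length + 2 + 1) := by
            simpa [SimpleGraph.Walk.length_cons] using hnodd
          have heven : Odd r'''.length := by
            rcases Nat.even_or_odd r'''.length with ⟨m, hm⟩ | hgood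
            · exact absurd ⟨m + 1, by omega⟩ hr3
            · exact hgood
          have hcyc := cy1 hKH
            (SimpleGraph.Walk.cons h0 (SimpleGraph.Walk.cons h1 (SimpleGraph.Walk.cons h2 r''')))
            hp (by simp) huv
          rcases heven with ⟨m, hm⟩
          exact hno (r'''.length + 1 + 1 + 1 + 1) (by omega) ⟨m + 2, by omega⟩ hcyc

lemma core {H' H : SimpleGraph V} (hH : H' ≤ H) (hno : NoLongOdd H) {k : ℕ}
    {u v : V} (htri : ∀ x, H'.Adj u x → H'.Adj x v → 3 ≤ k)
    {c : Sym2 V → ℕ} (hc : Proper H' c)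
    (hbd : ∀ a b, H'.Adj a b → c s(a,b) < k)
    {α β : ℕ} (hαk : α < k) (hβk : β < k)
    (hu : Miss H' c u α) (hv : Miss H' c v β)
    (huv : H.Adj u v) (hnuv : ¬ H'.Adj u v) :
    ∃ (c₁ : Sym2 V → ℕ) (a : ℕ), Proper H' c₁ ∧
      (∀ a' b', H'.Adj a' b' → c₁ s(a',b') < k) ∧
      a < k ∧ Miss H' c₁ u a ∧ Miss H' c₁ v a := by
  classical
  by_cases hab : α = β
  · exact ⟨c, α, hc, hbd, hαk, hu, hab ▸ hv⟩
  by_cases hβu : Miss H' c u β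
  · exact ⟨c, β, hc, hbd, hβk, hβu, hv⟩
  by_cases hr1 : (chainG H' c α β).Reachable u v
  case neg =>
    -- swap (α → β) on u's component; v untouched
    obtain ⟨c₂, hc₂, hval₂, hmu₂, hvp₂⟩ := swap_package hab hc hu hr1
    refine ⟨c₂, β, hc₂, ?_, hβk, hmu₂, ?_⟩
    · intro a' b' h'
      rcases hval₂ s(a',b') with h | h | h <;> rw [h]
      · exact hbd a' b' h'
      · exact hαk
      · exact hβk
    · intro z hz heq
      rw [hvp₂ z hz] at heq
      exact hv z hz heq
  case pos =>
    obtain ⟨x, hux, hxv, hcux, hcxv⟩ := reach_structure hH hno hc huv hu hv hr1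
    have hk3 : 3 ≤ k := htri x hux hxv
    obtain ⟨γ, hγk, hγα, hγβ⟩ : ∃ γ, γ < k ∧ γ ≠ α ∧ γ ≠ β := by
      refine ⟨if α = 0 ∨ β = 0 then (if α = 1 ∨ β = 1 then 2 else 1) else 0, ?_, ?_, ?_⟩ <;>
        split_ifs <;> omega
    by_cases hγu : Miss H' c u γ
    · -- chain (γ, β) from u
      by_cases hr2 : (chainG H' c γ β).Reachable u v
      · obtain ⟨x', hux', hx'v, hcux', hcx'v⟩ := reach_structure hH hno hc huv hγu hv hr2
        have hxx : x' = x := unique_color hc hux' hux (hcux'.trans hcux.symm)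
        subst hxx
        exact absurd (hcx'v.symm.trans hcxv) hγα
      · obtain ⟨c₂, hc₂, hval₂, hmu₂, hvp₂⟩ := swap_package hγβ hc hγu hr2
        refine ⟨c₂, β, hc₂, ?_, hβk, hmu₂, ?_⟩
        · intro a' b' h'
          rcases hval₂ s(a',b') with h | h | h <;> rw [h]
          · exact hbd a' b' h'
          · exact hγk
          · exact hβk
        · intro z hz heq
          rw [hvp₂ z hz] at heq
          exact hv z hz heq
    by_cases hγv : Miss H' c v γ
    · -- chain (α, γ) from u
      by_cases hr2 : (chainG H' c α γ).Reachable u v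
      · obtain ⟨x₂, hux₂, hx₂v, hcux₂, hcx₂v⟩ := reach_structure hH hno hc huv hu hγv hr2
        have hxx : x₂ = x := by
          apply unique_color hc hx₂v.symm hxv.symm
          rw [Sym2.eq_swap, hcx₂v, ← hcxv, Sym2.eq_swap]
        subst hxx
        exact absurd (hcux₂.symm.trans hcux) (by omega)
      · obtain ⟨c₂, hc₂, hval₂, hmu₂, hvp₂⟩ := swap_package (Ne.symm hγα) hc hu hr2
        refine ⟨c₂, γ, hc₂, ?_, hγk, hmu₂, ?_⟩
        · intro a' b' h'
          rcases hval₂ s(a',b') with h | h | h <;> rw [h]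
          · exact hbd a' b' h'
          · exact hαk
          · exact hγk
        · intro z hz heq
          rw [hvp₂ z hz] at heq
          exact hγv z hz heq
    · -- the hard case: γ present at both u and v
      by_cases hr2 : (chainG H' c α γ).Reachable u v
      · exact (lemmaC hH hno hc hab (Ne.symm hγα) (Ne.symm hγβ) huv hnuv hu hux hxv
          hcux hcxv hr2).elim
      · obtain ⟨c₂, hc₂, hval₂, hmu₂, hvp₂⟩ := swap_package (Ne.symm hγα) hc hu hr2
        have hv₂ : Miss H' c₂ v β := by
          intro z hz heq
          rw [hvp₂ z hz] at heq
          exact hv z hz heq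
        by_cases hr3 : (chainG H' c₂ γ β).Reachable u v
        · obtain ⟨x₄, hux₄, hx₄v, hc2ux₄, hc2x₄v⟩ :=
            reach_structure hH hno hc₂ huv hmu₂ hv₂ hr3
          exfalso
          have hcux₄ : c s(u,x₄) = β := by
            rcases hval₂ s(u,x₄) with h | h | h
            · rw [← h]; exact hc2ux₄
            · rw [h] at hc2ux₄; omega
            · rw [h] at hc2ux₄; omega
          have hxx : x₄ = x := unique_color hc hux₄ hux (hcux₄.trans hcux.symm)
          subst hxx
          have : c₂ s(x₄, v) = α := by
            have h6 := hvp₂ x₄ hx₄v.symm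
            rw [Sym2.eq_swap] at h6
            rw [h6]
            exact hcxv
          omega
        · obtain ⟨c₃, hc₃, hval₃, hmu₃, hvp₃⟩ := swap_package hγβ hc₂ hmu₂ hr3
          refine ⟨c₃, β, hc₃, ?_, hβk, hmu₃, ?_⟩
          · intro a' b' h'
            rcases hval₃ s(a',b') with h | h | h
            · rw [h]
              rcases hval₂ s(a',b') with h' | h' | h' <;> rw [h']
              · exact hbd _ _ ‹H'.Adj a' b'›
              · exact hαk
              · exact hγk
            · rw [h]; exact hγk
            · rw [h]; exact hβk
          · intro z hz heq
            rw [hvp₃ z hz, hvp₂ z hz] at heq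
            exact hv z hz heq

lemma exists_missing {H' : SimpleGraph V} {c : Sym2 V → ℕ} {k : ℕ} {u : V}
    (_hbd : ∀ a b, H'.Adj a b → c s(a,b) < k) {N : Finset V}
    (hNall : ∀ z, H'.Adj u z → z ∈ N) (hcard : N.card < k) :
    ∃ a, a < k ∧ Miss H' c u a := by
  classical
  set P : Finset ℕ := (N.filter (fun z => H'.Adj u z)).image (fun z => c s(u,z)) with hP
  have hPk : P.card < k :=
    lt_of_le_of_lt (le_trans Finset.card_image_le (Finset.card_filter_le _ _)) hcard
  have hnotsub : ¬ (Finset.range k ⊆ P) := by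
    intro hsub2
    have := Finset.card_le_card hsub2
    rw [Finset.card_range] at this
    omega
  obtain ⟨a, haR, haP⟩ := Finset.not_subset.mp hnotsub
  refine ⟨a, Finset.mem_range.mp haR, ?_⟩
  intro z hz heq
  exact haP (Finset.mem_image.mpr ⟨z, Finset.mem_filter.mpr ⟨hNall z hz, hz⟩, heq⟩)

theorem coloring_exists [Fintype V] :
    ∀ (n : ℕ) (H : SimpleGraph V), NoLongOdd H → H.edgeSet.ncard = n → ∀ k : ℕ,
    (∀ (w : V) (s : Finset V), (∀ z ∈ s, H.Adj w z) → s.card ≤ k) →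
    (∀ a b d : V, H.Adj a b → H.Adj b d → H.Adj d a → 3 ≤ k) →
    ∃ c : Sym2 V → ℕ, Proper H c ∧ ∀ a b, H.Adj a b → c s(a,b) < k := by
  classical
  intro n
  induction n using Nat.strong_induction_on with
  | _ n ih =>
    intro H hno hcard k hdeg htri
    by_cases he : H.edgeSet.Nonempty
    case neg =>
      refine ⟨fun _ => 0, ?_, ?_⟩
      · intro w a b h1 _ _ _
        exact he ⟨s(w,a), h1⟩
      · intro a b h1
        exact absurd ⟨s(a,b), h1⟩ he
    case pos =>
      obtain ⟨e, hemem⟩ := he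
      induction e using Sym2.ind with
      | _ u v =>
      have huv : H.Adj u v := H.mem_edgeSet.mp hemem
      set H' : SimpleGraph V := H.deleteEdges {s(u,v)} with hH'def
      have hH'le : H' ≤ H := SimpleGraph.deleteEdges_le _
      have hH'adj : ∀ a b, H'.Adj a b ↔ H.Adj a b ∧ s(a,b) ≠ s(u,v) := by
        intro a b
        rw [hH'def]
        simp [SimpleGraph.deleteEdges_adj]
      have hnuv : ¬ H'.Adj u v := by
        rw [hH'adj]
        simp
      have hes : H'.edgeSet = H.edgeSet \ {s(u,v)} := by
        rw [hH'def, SimpleGraph.edgeSet_deleteEdges]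
      have hlt : H'.edgeSet.ncard < n := by
        rw [hes, ← hcard]
        exact Set.ncard_diff_singleton_lt_of_mem hemem (Set.toFinite _)
      obtain ⟨c, hc, hbd⟩ := ih _ hlt H' (hno.mono hH'le) rfl k
        (fun w s hs => hdeg w s (fun z hz => hH'le (hs z hz)))
        (fun a b d h1 h2 h3 => htri a b d (hH'le h1) (hH'le h2) (hH'le h3))
      -- find missing colors at u and v
      have hcard' : ∀ w z₀, H.Adj w z₀ → ¬ H'.Adj w z₀ →
          (Finset.univ.filter (fun z => H'.Adj w z)).card < k := by
        intro w z₀ hwz hnwz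
        set N := Finset.univ.filter (fun z => H'.Adj w z) with hNdef
        have hsubkey : (insert z₀ N).card ≤ k := by
          apply hdeg w
          intro z hz
          rcases Finset.mem_insert.mp hz with rfl | hz
          · exact hwz
          · exact hH'le (Finset.mem_filter.mp hz).2
        have hnm : z₀ ∉ N := by
          rw [hNdef]
          intro hmm
          exact hnwz (Finset.mem_filter.mp hmm).2
        rw [Finset.card_insert_of_notMem hnm] at hsubkey
        omega
      obtain ⟨α, hαk, hu⟩ := exists_missing hbd
        (N := Finset.univ.filter (fun z => H'.Adj u z))
        (fun z hz => Finset.mem_filter.mpr ⟨Finset.mem_univ z, hz⟩) (hcard' u v huv hnuv)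
      obtain ⟨β, hβk, hv⟩ := exists_missing hbd
        (N := Finset.univ.filter (fun z => H'.Adj v z))
        (fun z hz => Finset.mem_filter.mpr ⟨Finset.mem_univ z, hz⟩)
        (hcard' v u huv.symm (fun hcon => hnuv hcon.symm))
      have hvmiss : Miss H' c v β := by
        intro z hz heq
        exact hv z hz heq
      obtain ⟨c₁, a, hc₁, hbd₁, hak, hu₁, hv₁⟩ := core hH'le hno
        (fun x h1 h2 => htri u x v (hH'le h1) (hH'le h2) huv.symm)
        hc hbd hαk hβk hu hvmiss huv hnuv
      refine ⟨fun e => if e = s(u,v) then a else c₁ e, ?_, ?_⟩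
      · intro w p q h1 h2 hne heq
        replace heq : (if s(w,p) = s(u,v) then a else c₁ s(w,p)) =
            (if s(w,q) = s(u,v) then a else c₁ s(w,q)) := heq
        by_cases m1 : s(w,p) = s(u,v) <;> by_cases m2 : s(w,q) = s(u,v)
        · exact hne (Sym2.congr_right.mp (m1.trans m2.symm))
        · rw [if_pos m1, if_neg m2] at heq
          have h2' : H'.Adj w q := (hH'adj w q).mpr ⟨h2, m2⟩
          rcases Sym2.eq_iff.mp m1 with ⟨rfl, rfl⟩ | ⟨rfl, rfl⟩
          · exact hu₁ q h2' heq.symm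
          · exact hv₁ q h2' heq.symm
        · rw [if_neg m1, if_pos m2] at heq
          have h1' : H'.Adj w p := (hH'adj w p).mpr ⟨h1, m1⟩
          rcases Sym2.eq_iff.mp m2 with ⟨rfl, rfl⟩ | ⟨rfl, rfl⟩
          · exact hu₁ p h1' heq
          · exact hv₁ p h1' heq
        · rw [if_neg m1, if_neg m2] at heq
          exact hc₁ ((hH'adj w p).mpr ⟨h1, m1⟩) ((hH'adj w q).mpr ⟨h2, m2⟩) hne heq
      · intro p q h1
        show (if s(p,q) = s(u,v) then a else c₁ s(p,q)) < k
        by_cases m : s(p,q) = s(u,v)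
        · rw [if_pos m]; exact hak
        · rw [if_neg m]; exact hbd₁ p q ((hH'adj p q).mpr ⟨h1, m⟩)

/-- The subgraph of `G` determined by a set of edges. -/
def edgeSub (G : SimpleGraph V) (s : Set G.edgeSet) : SimpleGraph V where
  Adj a b := ∃ e ∈ s, (e : Sym2 V) = s(a,b)
  symm := by
    refine ⟨?_⟩
    rintro a b ⟨e, hes, hev⟩
    exact ⟨e, hes, by rw [hev, Sym2.eq_swap]⟩
  loopless := by
    refine ⟨?_⟩
    rintro a ⟨e, hes, hev⟩
    exact G.loopless.irrefl a (G.mem_edgeSet.mp (by rw [← hev]; exact e.prop))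

lemma edgeSub_le {G : SimpleGraph V} {s : Set G.edgeSet} : edgeSub G s ≤ G := by
  rintro a b ⟨e, hes, hev⟩
  exact G.mem_edgeSet.mp (by rw [← hev]; exact e.prop)

lemma perfect_part [Fintype V] (G : SimpleGraph V) (hno : NoLongOdd G) (s : Set G.edgeSet) :
    (G.lineGraph.induce s).chromaticNumber = ((G.lineGraph.induce s).cliqueNum : ℕ∞) := by
  classical
  haveI : Fintype ↥s := Fintype.ofFinite _
  set k := (G.lineGraph.induce s).cliqueNum with hk
  set Hs := edgeSub G s with hHs
  have hHsle : Hs ≤ G := edgeSub_le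
  -- a family of pairwise-intersecting distinct members of s is a clique in the induced line graph
  have hclique : ∀ (T : Finset ↥s),
      (∀ e ∈ T, ∀ f ∈ T, e ≠ f → ((e : G.edgeSet) : Sym2 V) ≠ (f : G.edgeSet) ∧
        ∃ w, w ∈ ((e : G.edgeSet) : Sym2 V) ∧ w ∈ ((f : G.edgeSet) : Sym2 V)) →
      T.card ≤ k := by
    intro T hT
    have hcl : (G.lineGraph.induce s).IsClique (T : Set ↥s) := by
      intro e he f hf hne
      obtain ⟨hne', w, hw1, hw2⟩ := hT e he f hf hne
      show G.lineGraph.Adj _ _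
      rw [SimpleGraph.lineGraph_adj_iff_exists]
      exact ⟨Subtype.coe_ne_coe.mpr hne, w, hw1, hw2⟩
    rw [hk]
    exact SimpleGraph.IsClique.card_le_cliqueNum (tc := hcl)
  have hdeg : ∀ (w : V) (t : Finset V), (∀ z ∈ t, Hs.Adj w z) → t.card ≤ k := by
    intro w t ht
    -- choose for each z a member of s with value s(w,z)
    have hch : ∀ z ∈ t, ∃ e : ↥s, ((e : G.edgeSet) : Sym2 V) = s(w,z) := by
      intro z hz
      obtain ⟨e, hes, hev⟩ := ht z hz
      exact ⟨⟨e, hes⟩, hev⟩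
    choose F hF using hch
    set T : Finset ↥s := t.attach.image (fun z => F z.val z.prop) with hT
    have hcard : T.card = t.card := by
      rw [hT]
      rw [Finset.card_image_of_injective]
      · exact t.card_attach
      · intro z1 z2 h12
        have : ((F z1.val z1.prop : G.edgeSet) : Sym2 V) = ((F z2.val z2.prop : G.edgeSet) : Sym2 V) :=
          congrArg (fun x : ↥s => ((x : G.edgeSet) : Sym2 V)) h12
        rw [hF z1.val z1.prop, hF z2.val z2.prop] at this
        exact Subtype.ext (Sym2.congr_right.mp this)
    rw [← hcard]
    apply hclique
    intro e he f hf hne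
    rw [hT] at he hf
    obtain ⟨z1, _, rfl⟩ := Finset.mem_image.mp he
    obtain ⟨z2, _, rfl⟩ := Finset.mem_image.mp hf
    constructor
    · intro hcon
      exact hne (Subtype.ext (Subtype.ext hcon))
    · refine ⟨w, ?_, ?_⟩
      · rw [hF z1.val z1.prop]; exact Sym2.mem_mk_left _ _
      · rw [hF z2.val z2.prop]; exact Sym2.mem_mk_left _ _
  have htri : ∀ a b d : V, Hs.Adj a b → Hs.Adj b d → Hs.Adj d a → 3 ≤ k := by
    intro a b d h1 h2 h3
    obtain ⟨e1, he1, hv1⟩ := h1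
    obtain ⟨e2, he2, hv2⟩ := h2
    obtain ⟨e3, he3, hv3⟩ := h3
    have hab : G.Adj a b := hHsle ⟨e1, he1, hv1⟩
    have hbd' : G.Adj b d := hHsle ⟨e2, he2, hv2⟩
    have hda : G.Adj d a := hHsle ⟨e3, he3, hv3⟩
    have h12 : e1 ≠ e2 := by
      intro hcon
      rw [hcon, hv2] at hv1
      rcases Sym2.eq_iff.mp hv1 with ⟨h9, h10⟩ | ⟨h9, h10⟩
      · exact G.ne_of_adj hab h9.symm
      · exact G.ne_of_adj hda h10
    have h13 : e1 ≠ e3 := by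
      intro hcon
      rw [hcon, hv3] at hv1
      rcases Sym2.eq_iff.mp hv1 with ⟨h9, h10⟩ | ⟨h9, h10⟩
      · exact G.ne_of_adj hda h9
      · exact G.ne_of_adj hbd' h9.symm
    have h23 : e2 ≠ e3 := by
      intro hcon
      rw [hcon, hv3] at hv2
      rcases Sym2.eq_iff.mp hv2 with ⟨h9, h10⟩ | ⟨h9, h10⟩
      · exact G.ne_of_adj hbd' h9.symm
      · exact G.ne_of_adj hab h10
    set E1 : ↥s := ⟨e1, he1⟩
    set E2 : ↥s := ⟨e2, he2⟩
    set E3 : ↥s := ⟨e3, he3⟩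
    have hT3 : ({E1, E2, E3} : Finset ↥s).card = 3 := by
      rw [Finset.card_insert_of_notMem, Finset.card_insert_of_notMem, Finset.card_singleton]
      · simp only [Finset.mem_singleton]
        exact fun hcon => h23 (congrArg Subtype.val hcon)
      · simp only [Finset.mem_insert, Finset.mem_singleton]
        rintro (hcon | hcon)
        · exact h12 (congrArg Subtype.val hcon)
        · exact h13 (congrArg Subtype.val hcon)
    calc (3 : ℕ) = ({E1, E2, E3} : Finset ↥s).card := hT3.symm
      _ ≤ k := by
        apply hclique
        intro p hp q hq hne
        constructor
        · exact fun hcon => hne (Subtype.ext (Subtype.ext hcon))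
        · -- common vertex by cases
          simp only [Finset.mem_insert, Finset.mem_singleton] at hp hq
          rcases hp with rfl | rfl | rfl <;> rcases hq with rfl | rfl | rfl <;>
            first
            | exact absurd rfl hne
            | (refine ⟨b, ?_, ?_⟩ <;>
                simp only [E1, E2, E3, hv1, hv2, hv3] <;>
                first
                  | exact Sym2.mem_mk_left _ _
                  | exact Sym2.mem_mk_right _ _)
            | (refine ⟨a, ?_, ?_⟩ <;>
                simp only [E1, E2, E3, hv1, hv2, hv3] <;>
                first
                  | exact Sym2.mem_mk_left _ _
                  | exact Sym2.mem_mk_right _ _)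
            | (refine ⟨d, ?_, ?_⟩ <;>
                simp only [E1, E2, E3, hv1, hv2, hv3] <;>
                first
                  | exact Sym2.mem_mk_left _ _
                  | exact Sym2.mem_mk_right _ _)
  obtain ⟨c, hc, hbd⟩ := coloring_exists Hs.edgeSet.ncard Hs (hno.mono hHsle) rfl k hdeg htri
  have hbound : ∀ e : ↥s, c ((e : G.edgeSet) : Sym2 V) < k := by
    rintro ⟨⟨e, hee⟩, hes⟩
    induction e using Sym2.ind with
    | _ a b =>
      exact hbd a b ⟨⟨s(a,b), hee⟩, hes, rfl⟩
  have hcol : (G.lineGraph.induce s).Colorable k := by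
    refine ⟨SimpleGraph.Coloring.mk (fun e => ⟨c ((e : G.edgeSet) : Sym2 V), hbound e⟩) ?_⟩
    intro e f hadj heq
    have hadj' : G.lineGraph.Adj e.val f.val := hadj
    rw [SimpleGraph.lineGraph_adj_iff_exists] at hadj'
    obtain ⟨hne, w, hw1, hw2⟩ := hadj'
    obtain ⟨p, hp⟩ := Sym2.mem_iff_exists.mp hw1
    obtain ⟨q, hq⟩ := Sym2.mem_iff_exists.mp hw2
    have hpq : p ≠ q := by
      intro hcon
      apply hne
      apply Subtype.ext
      rw [hp, hq, hcon]
    have hA1 : Hs.Adj w p := ⟨e.val, e.prop, hp⟩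
    have hA2 : Hs.Adj w q := ⟨f.val, f.prop, hq⟩
    have : c ((e : G.edgeSet) : Sym2 V) = c ((f : G.edgeSet) : Sym2 V) := by
      have := congrArg Fin.val heq
      exact this
    rw [hp, hq] at this
    exact hc hA1 hA2 hpq this
  apply le_antisymm
  · exact hcol.chromaticNumber_le
  · obtain ⟨t, ht⟩ := SimpleGraph.exists_isNClique_cliqueNum (G := G.lineGraph.induce s)
    have := SimpleGraph.IsClique.card_le_chromaticNumber ht.isClique
    rw [ht.card_eq] at this
    exact this

lemma succ_val {M : ℕ} (i : Fin (M+1)) :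
    ((i+1).val = i.val + 1) ∨ (i.val = M ∧ (i+1).val = 0) := by
  rcases eq_or_ne i (Fin.last M) with rfl | hne
  · right
    refine ⟨by simp [Fin.val_last], ?_⟩
    rw [Fin.val_add_one, if_pos rfl]
  · left
    rw [Fin.val_add_one, if_neg hne]

open Fin.NatCast in
lemma not_perfect_part [Fintype V] (G : SimpleGraph V) {n : ℕ} (h5 : 5 ≤ n) (hodd : Odd n)
    (hcs : ContainsSub G (cycleGraph n)) : ¬ G.lineGraph.IsPerfect := by
  classical
  obtain ⟨m, rfl⟩ : ∃ m, n = m + 5 := ⟨n - 5, by omega⟩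
  obtain ⟨f, hinj, hadjf⟩ := hcs
  have hstep : ∀ i : Fin (m+5), G.Adj (f i) (f (i+1)) := by
    intro i
    apply hadjf
    rw [show (cycleGraph (m+5)).Adj i (i+1) ↔ _ from cycleGraph_adj]
    right
    exact add_sub_cancel_left i 1
  set E : Fin (m+5) → G.edgeSet := fun i => ⟨s(f i, f (i+1)), G.mem_edgeSet.mpr (hstep i)⟩ with hE
  have hEval : ∀ i : Fin (m+5), ((E i : G.edgeSet) : Sym2 V) = s(f i, f (i+1)) := fun i => rfl
  have hsucc : ∀ i : Fin (m+5), ((i+1).val = i.val + 1) ∨ (i.val = m + 4 ∧ (i+1).val = 0) :=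
    fun i => succ_val (M := m + 4) i
  have hselfne : ∀ i : Fin (m+5), i + 1 ≠ i := by
    intro i hcon
    have hv := congrArg Fin.val hcon
    have := i.isLt
    rcases hsucc i with hs | ⟨hs1, hs2⟩ <;> omega
  have hEinj : ∀ i j : Fin (m+5), E i = E j → i = j := by
    intro i j h
    have h2 : s(f i, f (i+1)) = s(f j, f (j+1)) := congrArg Subtype.val h
    rcases Sym2.eq_iff.mp h2 with ⟨ha, _⟩ | ⟨ha, hb⟩
    · exact hinj ha
    · exfalso
      have e1 := congrArg Fin.val (hinj ha)
      have e2 := congrArg Fin.val (hinj hb)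
      have := i.isLt
      have := j.isLt
      rcases hsucc j with hs | ⟨hs1, hs2⟩ <;> rcases hsucc i with ht | ⟨ht1, ht2⟩ <;> omega
  set s : Set G.edgeSet := Set.range E with hsdef
  haveI : Fintype ↥s := Fintype.ofFinite _
  intro hperf
  have hval := hperf s
  set g : ℕ → ↥s := fun t => ⟨E ((t : Fin (m+5))), Set.mem_range_self _⟩ with hgdef
  have hadjg : ∀ t : ℕ, (G.lineGraph.induce s).Adj (g t) (g (t+1)) := by
    intro t
    show G.lineGraph.Adj _ _
    rw [SimpleGraph.lineGraph_adj_iff_exists]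
    have hcast : ((t+1 : ℕ) : Fin (m+5)) = ((t : ℕ) : Fin (m+5)) + 1 := by push_cast; ring
    constructor
    · show E _ ≠ E _
      intro hcon
      rw [hcast] at hcon
      exact hselfne _ ((hEinj _ _ hcon).symm)
    · refine ⟨f (((t : ℕ) : Fin (m+5)) + 1), ?_, ?_⟩
      · show f (((t : ℕ) : Fin (m+5)) + 1) ∈
          (s(f ((t : ℕ) : Fin (m+5)), f (((t : ℕ) : Fin (m+5)) + 1)) : Sym2 V)
        exact Sym2.mem_mk_right _ _
      · show f (((t : ℕ) : Fin (m+5)) + 1) ∈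
          (s(f (((t+1 : ℕ)) : Fin (m+5)), f ((((t+1 : ℕ)) : Fin (m+5)) + 1)) : Sym2 V)
        rw [hcast]
        exact Sym2.mem_mk_left _ _
  have hwalk : ∀ t : ℕ, ∃ p : (G.lineGraph.induce s).Walk (g 0) (g t), p.length = t := by
    intro t
    induction t with
    | zero => exact ⟨SimpleGraph.Walk.nil, rfl⟩
    | succ t ih =>
      obtain ⟨p, hp⟩ := ih
      exact ⟨p.concat (hadjg t), by rw [SimpleGraph.Walk.length_concat, hp]⟩
  obtain ⟨p, hp⟩ := hwalk (m+5)
  have hgN : g (m+5) = g 0 := by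
    rw [hgdef]
    refine Subtype.ext ?_
    show E (((m+5) : ℕ) : Fin (m+5)) = E ((0 : ℕ) : Fin (m+5))
    rw [Fin.natCast_self, Nat.cast_zero]
  have hχ := SimpleGraph.Walk.three_le_chromaticNumber_of_odd_loop (p.copy rfl hgN)
    (by rw [SimpleGraph.Walk.length_copy, hp]; exact hodd)
  have hk3 : 3 ≤ (G.lineGraph.induce s).cliqueNum := by
    have h9 : (3 : ℕ∞) ≤ (((G.lineGraph.induce s).cliqueNum : ℕ) : ℕ∞) := hval ▸ hχ
    exact_mod_cast h9
  obtain ⟨t, ht⟩ := SimpleGraph.exists_isNClique_cliqueNum (G := G.lineGraph.induce s)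
  have hcard3 : 2 < t.card := by rw [ht.card_eq]; omega
  obtain ⟨x, y, z, hx, hy, hz, hxy, hxz, hyz⟩ := Finset.two_lt_card_iff.mp hcard3
  obtain ⟨i, hi⟩ := x.prop
  obtain ⟨j, hj⟩ := y.prop
  obtain ⟨k, hk⟩ := z.prop
  have hR : ∀ (a b : ↥s) (ia ib : Fin (m+5)), E ia = a.val → E ib = b.val → a ≠ b →
      (G.lineGraph.induce s).Adj a b → ia = ib + 1 ∨ ib = ia + 1 := by
    intro a b ia ib hA hB hne hadj
    have hadj' : G.lineGraph.Adj a.val b.val := hadj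
    rw [SimpleGraph.lineGraph_adj_iff_exists] at hadj'
    obtain ⟨hne', w, hw1, hw2⟩ := hadj'
    rw [← hA] at hw1
    rw [← hB] at hw2
    rw [hEval] at hw1 hw2
    have hiaib : ia ≠ ib := fun hcon => hne (Subtype.ext (by rw [← hA, ← hB, hcon]))
    rcases Sym2.mem_iff.mp hw1 with h1 | h1 <;> rcases Sym2.mem_iff.mp hw2 with h2 | h2
    · exact absurd (hinj (h1.symm.trans h2)) hiaib
    · exact Or.inl (hinj (h1.symm.trans h2))
    · exact Or.inr (hinj (h2.symm.trans h1))
    · exact absurd (add_right_cancel (hinj (h1.symm.trans h2))) hiaib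
  have hcl := ht.isClique
  have hRxy := hR x y i j hi hj hxy (hcl (Finset.mem_coe.mpr hx) (Finset.mem_coe.mpr hy) hxy)
  have hRxz := hR x z i k hi hk hxz (hcl (Finset.mem_coe.mpr hx) (Finset.mem_coe.mpr hz) hxz)
  have hRyz := hR y z j k hj hk hyz (hcl (Finset.mem_coe.mpr hy) (Finset.mem_coe.mpr hz) hyz)
  have hij : i ≠ j := fun h => hxy (Subtype.ext (by rw [← hi, ← hj, h]))
  have hik : i ≠ k := fun h => hxz (Subtype.ext (by rw [← hi, ← hk, h]))
  have hjk : j ≠ k := fun h => hyz (Subtype.ext (by rw [← hj, ← hk, h]))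
  have dij : i.val ≠ j.val := fun hv => hij (Fin.ext hv)
  have dik : i.val ≠ k.val := fun hv => hik (Fin.ext hv)
  have djk : j.val ≠ k.val := fun hv => hjk (Fin.ext hv)
  have hiN := i.isLt
  have hjN := j.isLt
  have hkN := k.isLt
  rcases hsucc i with hsi | ⟨hsi1, hsi2⟩ <;> rcases hsucc j with hsj | ⟨hsj1, hsj2⟩ <;>
    rcases hsucc k with hsk | ⟨hsk1, hsk2⟩ <;>
    rcases hRxy with h1 | h1 <;> rcases hRxz with h2 | h2 <;> rcases hRyz with h3 | h3 <;>
    · have v1 := congrArg Fin.val h1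
      have v2 := congrArg Fin.val h2
      have v3 := congrArg Fin.val h3
      omega

end Trotter

/-- Trotter's theorem: a simple graph is line perfect iff it contains no odd cycle of
length at least 5 as a subgraph. -/
theorem linePerfect_iff_no_long_odd_cycle {V : Type} [Fintype V] (G : SimpleGraph V) :
    G.lineGraph.IsPerfect ↔ ∀ n : ℕ, 5 ≤ n → Odd n → ¬ ContainsSub G (cycleGraph n) := by
  constructor
  · intro hperf n h5 ho hcs
    exact Trotter.not_perfect_part G h5 ho hcs hperf
  · intro hno s
    exact Trotter.perfect_part G hno s
end

section
/- The graph K_5 minus an edge (the complete graph on 5 vertices with one edge removed) is not an induced subgraph of any line graph. -/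
open SimpleGraph

private lemma sym2_exists_eq {α : Type*} (z : Sym2 α) : ∃ a b, z = s(a, b) := by
  induction z using Sym2.ind with
  | _ x y => exact ⟨x, y, rfl⟩

set_option maxHeartbeats 1600000 in
/-- `K_5` minus an edge is not an induced subgraph of any line graph. -/
theorem K5_minus_edge_not_induced_in_lineGraph {V : Type} (G : SimpleGraph V) :
    IsEmpty (((⊤ : SimpleGraph (Fin 5)).deleteEdges {s(0, 1)}) ↪g G.lineGraph) := by
  constructor
  intro φ
  have hne : ∀ i j : Fin 5, i ≠ j → φ i ≠ φ j := fun i j hij h => hij (φ.injective h)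
  have key : ∀ i j : Fin 5, i ≠ j → s(i, j) ≠ s(0, 1) →
      ∃ v, v ∈ (↑(φ i) : Sym2 V) ∧ v ∈ (↑(φ j) : Sym2 V) := by
    intro i j hij hs
    have : G.lineGraph.Adj (φ i) (φ j) := by
      rw [φ.map_adj_iff]
      simp [deleteEdges_adj, hij, hs]
    exact (lineGraph_adj_iff_exists.mp this).2
  have hnadj : ¬ G.lineGraph.Adj (φ 0) (φ 1) := by
    rw [φ.map_adj_iff]; simp [deleteEdges_adj]
  have hdisj : ∀ x : V, x ∈ (↑(φ 0) : Sym2 V) → x ∉ (↑(φ 1) : Sym2 V) := by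
    intro x h0 h1
    exact hnadj (lineGraph_adj_iff_exists.mpr ⟨hne 0 1 (by decide), x, h0, h1⟩)
  -- get shared vertices
  obtain ⟨v2, hv20, hv22⟩ := key 0 2 (by decide) (by decide)
  obtain ⟨v3, hv30, hv33⟩ := key 0 3 (by decide) (by decide)
  obtain ⟨v4, hv40, hv44⟩ := key 0 4 (by decide) (by decide)
  obtain ⟨w2, hw21, hw22⟩ := key 1 2 (by decide) (by decide)
  obtain ⟨w3, hw31, hw33⟩ := key 1 3 (by decide) (by decide)
  obtain ⟨w4, hw41, hw44⟩ := key 1 4 (by decide) (by decide)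
  have e2 : (↑(φ 2) : Sym2 V) = s(v2, w2) :=
    (Sym2.mem_and_mem_iff (by rintro rfl; exact hdisj _ hv20 hw21)).mp ⟨hv22, hw22⟩
  have e3 : (↑(φ 3) : Sym2 V) = s(v3, w3) :=
    (Sym2.mem_and_mem_iff (by rintro rfl; exact hdisj _ hv30 hw31)).mp ⟨hv33, hw33⟩
  have e4 : (↑(φ 4) : Sym2 V) = s(v4, w4) :=
    (Sym2.mem_and_mem_iff (by rintro rfl; exact hdisj _ hv40 hw41)).mp ⟨hv44, hw44⟩
  -- pairwise sharing among 2,3,4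
  have pair : ∀ (i j : Fin 5) (vi wi vj wj : V),
      (↑(φ i) : Sym2 V) = s(vi, wi) → (↑(φ j) : Sym2 V) = s(vj, wj) →
      vi ∈ (↑(φ 0) : Sym2 V) → vj ∈ (↑(φ 0) : Sym2 V) →
      wi ∈ (↑(φ 1) : Sym2 V) → wj ∈ (↑(φ 1) : Sym2 V) →
      i ≠ j → s(i, j) ≠ s(0, 1) → vi = vj ∨ wi = wj := by
    intro i j vi wi vj wj hi hj hvi hvj hwi hwj hij hs
    obtain ⟨u, hui, huj⟩ := key i j hij hs
    rw [hi, Sym2.mem_iff] at hui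
    rw [hj, Sym2.mem_iff] at huj
    rcases hui with h1 | h1 <;> rcases huj with h2 | h2
    · exact Or.inl (h1.symm.trans h2)
    · exact (hdisj u (by rw [h1]; exact hvi) (by rw [h2]; exact hwj)).elim
    · exact (hdisj u (by rw [h2]; exact hvj) (by rw [h1]; exact hwi)).elim
    · exact Or.inr (h1.symm.trans h2)
  have P23 := pair 2 3 v2 w2 v3 w3 e2 e3 hv20 hv30 hw21 hw31 (by decide) (by decide)
  have P24 := pair 2 4 v2 w2 v4 w4 e2 e4 hv20 hv40 hw21 hw41 (by decide) (by decide)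
  have P34 := pair 3 4 v3 w3 v4 w4 e3 e4 hv30 hv40 hw31 hw41 (by decide) (by decide)
  have N : ∀ (i j : Fin 5) (vi wi vj wj : V),
      (↑(φ i) : Sym2 V) = s(vi, wi) → (↑(φ j) : Sym2 V) = s(vj, wj) →
      i ≠ j → ¬(vi = vj ∧ wi = wj) := by
    rintro i j vi wi vj wj hi hj hij ⟨rfl, rfl⟩
    exact hne i j hij (Subtype.ext (hi.trans hj.symm))
  have N23 := N 2 3 v2 w2 v3 w3 e2 e3 (by decide)
  have N24 := N 2 4 v2 w2 v4 w4 e2 e4 (by decide)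
  have N34 := N 3 4 v3 w3 v4 w4 e3 e4 (by decide)
  -- decompose φ 0 and φ 1
  obtain ⟨a, b, h0⟩ := sym2_exists_eq (↑(φ 0) : Sym2 V)
  obtain ⟨c, d, h1⟩ := sym2_exists_eq (↑(φ 1) : Sym2 V)
  have hab : a ≠ b := by
    intro h
    apply G.not_isDiag_of_mem_edgeSet (φ 0).2
    rw [h0, h]
    simp
  have hcd : c ≠ d := by
    intro h
    apply G.not_isDiag_of_mem_edgeSet (φ 1).2
    rw [h1, h]
    simp
  rw [h0, Sym2.mem_iff] at hv20 hv30 hv40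
  rw [h1, Sym2.mem_iff] at hw21 hw31 hw41
  clear key hnadj hdisj hne pair N e2 e3 e4 h0 h1 hv22 hv33 hv44 hw22 hw33 hw44 φ G
  rcases hv20 with rfl | rfl <;> rcases hv30 with rfl | rfl <;> rcases hv40 with rfl | rfl <;>
    rcases hw21 with rfl | rfl <;> rcases hw31 with rfl | rfl <;> rcases hw41 with rfl | rfl <;>
    tauto
end

section
/- For every bipartite simple graph G, the chromatic index χ'(G) equals the maximum degree Δ(G) (König's edge colouring theorem), and hence every edge-induced subgraph H of a bipartite graph satisfies χ'(H) = ω(L(H)) whenever Δ(H) ≠ 2 or H is triangle-free; in particular, every bipartite graph is line perfect. -/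
open SimpleGraph

namespace KonigEC

variable {V : Type} [Fintype V]

def Good (G : SimpleGraph V) (D : ℕ) (c : Sym2 V → ℕ) : Prop :=
  (∀ e ∈ G.edgeSet, c e < D) ∧
  ∀ e ∈ G.edgeSet, ∀ f ∈ G.edgeSet, e ≠ f → (∃ x, x ∈ e ∧ x ∈ f) → c e ≠ c f

lemma exists_missing (G' : SimpleGraph V) (c : Sym2 V → ℕ) (w : V) (D : ℕ)
    (h : (G'.incidenceSet w).ncard < D) :
    ∃ γ, γ < D ∧ ∀ f ∈ G'.edgeSet, w ∈ f → c f ≠ γ := by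
  by_contra hcon
  push_neg at hcon
  have hsub : (↑(Finset.range D) : Set ℕ) ⊆ c '' G'.incidenceSet w := by
    intro γ hγ
    simp only [Finset.coe_range, Set.mem_Iio] at hγ
    obtain ⟨f, hf, hwf, hcf⟩ := hcon γ hγ
    exact ⟨f, ⟨hf, hwf⟩, hcf⟩
  have h1 : D ≤ (c '' G'.incidenceSet w).ncard := by
    have := Set.ncard_le_ncard hsub (Set.toFinite _)
    rwa [Set.ncard_coe_finset, Finset.card_range] at this
  have h2 : (c '' G'.incidenceSet w).ncard ≤ (G'.incidenceSet w).ncard :=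
    Set.ncard_image_le (Set.toFinite _)
  omega

lemma konig_aux (D : ℕ) : ∀ (n : ℕ) (G : SimpleGraph V), G.Colorable 2 →
    (∀ v, (G.incidenceSet v).ncard ≤ D) → G.edgeSet.ncard ≤ n → ∃ c, Good G D c := by
  intro n
  induction n with
  | zero =>
    intro G _ _ h0
    have hE : G.edgeSet = ∅ := (Set.ncard_eq_zero (Set.toFinite _)).1 (Nat.le_zero.1 h0)
    exact ⟨fun _ => 0, fun e he => by simp [hE] at he, fun e he => by simp [hE] at he⟩
  | succ n ih =>
    intro G hcol hdeg hcard
    classical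
    by_cases hne : G.edgeSet = ∅
    · exact ⟨fun _ => 0, fun e he => by simp [hne] at he, fun e he => by simp [hne] at he⟩
    obtain ⟨e₀, he₀⟩ := Set.nonempty_iff_ne_empty.2 hne
    obtain ⟨u, v, rfl⟩ : ∃ a b, e₀ = s(a, b) := Sym2.ind (fun a b => ⟨a, b, rfl⟩) e₀
    have huv : G.Adj u v := (G.mem_edgeSet).1 he₀
    set G' := G.deleteEdges {s(u, v)} with hG'def
    have hG'edge : G'.edgeSet = G.edgeSet \ {s(u, v)} := G.edgeSet_deleteEdges _
    have hG'le : G' ≤ G := G.deleteEdges_le _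
    have hedge' : ∀ f ∈ G.edgeSet, f ≠ s(u, v) → f ∈ G'.edgeSet := by
      intro f hf hfe; rw [hG'edge]; exact ⟨hf, hfe⟩
    have hedgesub : G'.edgeSet ⊆ G.edgeSet := by rw [hG'edge]; exact Set.diff_subset
    have hincsub : ∀ w, G'.incidenceSet w ⊆ G.incidenceSet w := fun w f hf => ⟨hedgesub hf.1, hf.2⟩
    obtain ⟨c, hbound, hproper⟩ := ih G' (hcol.mono_left hG'le)
      (fun w => le_trans (Set.ncard_le_ncard (hincsub w) (Set.toFinite _)) (hdeg w))
      (by rw [hG'edge, Set.ncard_diff_singleton_of_mem he₀]; omega)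
    have hstrict : ∀ w, w ∈ s(u, v) → (G'.incidenceSet w).ncard < D := by
      intro w hw
      have hmem : s(u, v) ∈ G.incidenceSet w := ⟨he₀, hw⟩
      have hnot : s(u, v) ∉ G'.incidenceSet w := by
        intro h
        have := h.1
        rw [hG'edge] at this
        exact this.2 rfl
      exact lt_of_lt_of_le
        (Set.ncard_lt_ncard ⟨hincsub w, fun hsup => hnot (hsup hmem)⟩ (Set.toFinite _)) (hdeg w)
    obtain ⟨α, hαD, hαu⟩ := exists_missing G' c u D (hstrict u (by simp))
    obtain ⟨β, hβD, hβv⟩ := exists_missing G' c v D (hstrict v (by simp))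
    by_cases hβu : ∀ f ∈ G'.edgeSet, u ∈ f → c f ≠ β
    · refine ⟨fun e => if e = s(u, v) then β else c e, ?_, ?_⟩
      · intro e he
        by_cases h : e = s(u, v)
        · simpa [h] using hβD
        · simpa [h] using hbound e (hedge' e he h)
      · intro e he f hf hef hshare
        dsimp only
        have key : ∀ g ∈ G'.edgeSet, (∃ x, x ∈ s(u, v) ∧ x ∈ g) → c g ≠ β := by
          rintro g hg ⟨x, hx1, hx2⟩
          rcases Sym2.mem_iff.1 hx1 with rfl | rfl
          · exact hβu g hg hx2
          · exact hβv g hg hx2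
        by_cases h1 : e = s(u, v) <;> by_cases h2 : f = s(u, v)
        · exact absurd (h1.trans h2.symm) hef
        · subst h1; rw [if_pos rfl, if_neg h2]
          exact fun h => key f (hedge' f hf h2) hshare h.symm
        · subst h2; rw [if_neg h1, if_pos rfl]
          obtain ⟨x, hx1, hx2⟩ := hshare
          exact key e (hedge' e he h1) ⟨x, hx2, hx1⟩
        · rw [if_neg h1, if_neg h2]
          exact hproper e (hedge' e he h1) f (hedge' f hf h2) hef hshare
    · push_neg at hβu
      obtain ⟨f₀, hf₀, hf₀u, hf₀β⟩ := hβu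
      have hαβ : α ≠ β := fun h => hαu f₀ hf₀ hf₀u (by rw [hf₀β, h])
      obtain ⟨C2⟩ := hcol
      have hC2 : ∀ {x y}, G.Adj x y → C2 x ≠ C2 y := fun h => C2.valid h
      set S : SimpleGraph V := ⟨fun x y => G'.Adj x y ∧ (c s(x, y) = α ∨ c s(x, y) = β),
        ⟨fun x y h => ⟨h.1.symm, by rw [Sym2.eq_swap]; exact h.2⟩⟩,
        ⟨fun x h => G'.loopless.irrefl x h.1⟩⟩ with hSdef
      have hSG : ∀ {x y}, S.Adj x y → G.Adj x y := fun h => hG'le h.1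
      have hUedge : ∀ y, S.Adj u y → c s(u, y) = β := by
        intro y hy
        rcases hy.2 with h | h
        · exact absurd h (hαu _ ((G'.mem_edgeSet).2 hy.1) (by simp))
        · exact h
      have hVedge : ∀ y, S.Adj v y → c s(v, y) = α := by
        intro y hy
        rcases hy.2 with h | h
        · exact h
        · exact absurd h (hβv _ ((G'.mem_edgeSet).2 hy.1) (by simp))
      set swapped : Sym2 V → Prop :=
        fun e => e ∈ S.edgeSet ∧ ∃ x, x ∈ e ∧ S.Reachable u x with hswdef
      have edge_decomp : ∀ e : Sym2 V, ∃ a b, e = s(a, b) :=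
        fun e => Sym2.ind (fun a b => ⟨a, b, rfl⟩) e
      have swap_all' : ∀ a b, swapped s(a, b) → S.Reachable u a := by
        rintro a b ⟨heS, x, hxe, hx⟩
        have hab : S.Adj a b := (S.mem_edgeSet).1 heS
        rcases Sym2.mem_iff.1 hxe with rfl | rfl
        · exact hx
        · exact hx.trans hab.symm.reachable
      have swap_all : ∀ e, swapped e → ∀ w, w ∈ e → S.Reachable u w := by
        intro e hsw w hwe
        obtain ⟨y, rfl⟩ := Sym2.mem_iff_exists.1 hwe
        exact swap_all' w y hsw
      have hKey : ¬ S.Reachable u v := by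
        intro hR
        obtain ⟨p₀⟩ := hR
        obtain ⟨p, hp⟩ := p₀.toPath
        have fin2 : ∀ a b d : Fin 2, a ≠ b → b ≠ d → a = d := by decide
        have claim : ∀ (x w : V) (q : S.Walk x w), q.IsPath → 0 < q.length → v = w →
            (c s(x, q.getVert 1) = α ↔ C2 x ≠ C2 v) := by
          intro x w q
          induction q with
          | nil => intro _ h _; simp at h
          | @cons x y w hxy q ih =>
            intro hp hl hw
            subst hw
            rw [SimpleGraph.Walk.getVert_cons_succ, SimpleGraph.Walk.getVert_zero]
            cases q with
            | nil =>
              constructor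
              · intro _; exact hC2 (hSG hxy)
              · intro _
                rw [Sym2.eq_swap]
                exact hVedge x hxy.symm
            | @cons _ z _ hyz q2 =>
              have htail : (SimpleGraph.Walk.cons hyz q2).IsPath := hp.of_cons
              have hxs : x ∉ (SimpleGraph.Walk.cons hyz q2).support :=
                ((SimpleGraph.Walk.cons_isPath_iff _ _).1 hp).2
              have hxz : x ≠ z := by
                intro h
                apply hxs
                rw [SimpleGraph.Walk.support_cons]
                exact List.mem_cons_of_mem _ (h ▸ q2.start_mem_support)
              have hxy' : x ≠ y := hxy.ne
              have hne2 : s(x, y) ≠ s(y, z) := by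
                intro hcon
                rcases Sym2.eq_iff.1 hcon with ⟨h1, -⟩ | ⟨h1, -⟩
                · exact hxy' h1
                · exact hxz h1
              have hcne : c s(x, y) ≠ c s(y, z) :=
                hproper _ ((G'.mem_edgeSet).2 hxy.1) _ ((G'.mem_edgeSet).2 hyz.1) hne2
                  ⟨y, by simp, by simp⟩
              have ihres : c s(y, z) = α ↔ C2 y ≠ C2 v := by
                have := ih htail (by simp) rfl
                rwa [SimpleGraph.Walk.getVert_cons_succ, SimpleGraph.Walk.getVert_zero] at this
              have hC2xy : C2 x ≠ C2 y := hC2 (hSG hxy)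
              rcases hxy.2 with h1 | h1
              · have h4 : ¬ (c s(y, z) = α) := fun hh => hcne (h1.trans hh.symm)
                have h3 : C2 y = C2 v := not_not.1 (fun hh => h4 (ihres.2 hh))
                refine ⟨fun _ => ?_, fun _ => h1⟩
                rw [← h3]
                exact hC2xy
              · have h4 : c s(y, z) ≠ β := fun hh => hcne (h1.trans hh.symm)
                have h5 : c s(y, z) = α := by
                  rcases hyz.2 with h | h
                  · exact h
                  · exact absurd h h4
                have h6 : C2 y ≠ C2 v := ihres.1 h5
                refine ⟨fun hh => absurd (hh.symm.trans h1) hαβ, fun hh => ?_⟩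
                exact absurd (fin2 _ _ _ hC2xy h6) hh
        have hlp : 0 < p.length :=
          Nat.pos_of_ne_zero (fun h => huv.ne (SimpleGraph.Walk.eq_of_length_eq_zero h))
        have h1 := (claim u v p hp hlp rfl).2 (hC2 huv)
        have hadj01 : S.Adj u (p.getVert 1) := by
          have := p.adj_getVert_succ (i := 0) hlp
          simpa using this
        exact hαβ (h1.symm.trans (hUedge _ hadj01))
      -- the colour swap
      set σ : ℕ → ℕ := fun m => if m = α then β else if m = β then α else m with hσdef
      have hσlt : ∀ m, m < D → σ m < D := by
        intro m hm; simp only [hσdef]; split_ifs <;> omega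
      have hσinj : ∀ m k, σ m = σ k → m = k := by
        intro m k; simp only [hσdef]; split_ifs <;> omega
      have hσab : σ α = β := by simp [hσdef]
      have hσba : σ β = α := by
        have : β ≠ α := hαβ.symm
        simp [hσdef, this]
      have hσmem : ∀ m, m = α ∨ m = β → σ m = α ∨ σ m = β := by
        rintro m (rfl | rfl)
        · exact Or.inr hσab
        · exact Or.inl hσba
      set c' : Sym2 V → ℕ := fun e => if swapped e then σ (c e) else c e with hc'def
      have hc'swap : ∀ e, swapped e → c' e = σ (c e) := by
        intro e h; simp only [hc'def]; rw [if_pos h]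
      have hc'nswap : ∀ e, ¬ swapped e → c' e = c e := by
        intro e h; simp only [hc'def]; rw [if_neg h]
      have hc'bound : ∀ e ∈ G'.edgeSet, c' e < D := by
        intro e he
        by_cases h : swapped e
        · rw [hc'swap e h]; exact hσlt _ (hbound e he)
        · rw [hc'nswap e h]; exact hbound e he
      have hSedge_mem : ∀ e ∈ S.edgeSet, c e = α ∨ c e = β := by
        intro e he
        obtain ⟨a, b, rfl⟩ := edge_decomp e
        exact ((S.mem_edgeSet).1 he).2
      have hmemS : ∀ e ∈ G'.edgeSet, (c e = α ∨ c e = β) → e ∈ S.edgeSet := by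
        intro e he hc
        obtain ⟨a, b, rfl⟩ := edge_decomp e
        exact (S.mem_edgeSet).2 ⟨(G'.mem_edgeSet).1 he, hc⟩
      have main : ∀ e ∈ G'.edgeSet, ∀ f ∈ G'.edgeSet, e ≠ f → (∃ x, x ∈ e ∧ x ∈ f) →
          swapped e → ¬ swapped f → c' e ≠ c' f := by
        rintro e he f hf hef ⟨x, hxe, hxf⟩ hse hsf
        rw [hc'swap e hse, hc'nswap f hsf]
        have hce : c e = α ∨ c e = β := hSedge_mem e hse.1
        have hcf : ¬ (c f = α ∨ c f = β) := by
          intro h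
          exact hsf ⟨hmemS f hf h, x, hxf, swap_all e hse x hxe⟩
        intro hcon
        exact hcf (hcon ▸ hσmem _ hce)
      have hproper' : ∀ e ∈ G'.edgeSet, ∀ f ∈ G'.edgeSet, e ≠ f → (∃ x, x ∈ e ∧ x ∈ f) →
          c' e ≠ c' f := by
        intro e he f hf hef hshare
        by_cases hse : swapped e <;> by_cases hsf : swapped f
        · rw [hc'swap e hse, hc'swap f hsf]
          exact fun h => hproper e he f hf hef hshare (hσinj _ _ h)
        · exact main e he f hf hef hshare hse hsf
        · obtain ⟨x, hxe, hxf⟩ := hshare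
          exact fun h => (main f hf e he hef.symm ⟨x, hxf, hxe⟩ hsf hse) h.symm
        · rw [hc'nswap e hse, hc'nswap f hsf]; exact hproper e he f hf hef hshare
      have hβu' : ∀ f ∈ G'.edgeSet, u ∈ f → c' f ≠ β := by
        intro f hf huf
        by_cases hsf : swapped f
        · rw [hc'swap f hsf]
          intro h
          have hcf := hSedge_mem f hsf.1
          have hfα : c f = α := by
            rcases hcf with h' | h'
            · exact h'
            · rw [h', hσba] at h; exact absurd h hαβ
          exact hαu f hf huf hfα
        · rw [hc'nswap f hsf]
          intro h
          exact hsf ⟨hmemS f hf (Or.inr h), u, huf, SimpleGraph.Reachable.refl u⟩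
      have hβv' : ∀ f ∈ G'.edgeSet, v ∈ f → c' f ≠ β := by
        intro f hf hvf
        by_cases hsf : swapped f
        · exact fun _ => hKey (swap_all f hsf v hvf)
        · rw [hc'nswap f hsf]; exact hβv f hf hvf
      refine ⟨fun e => if e = s(u, v) then β else c' e, ?_, ?_⟩
      · intro e he
        dsimp only
        by_cases h : e = s(u, v)
        · simpa [h] using hβD
        · rw [if_neg h]; exact hc'bound e (hedge' e he h)
      · intro e he f hf hef hshare
        dsimp only
        have key : ∀ g ∈ G'.edgeSet, (∃ x, x ∈ s(u, v) ∧ x ∈ g) → c' g ≠ β := by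
          rintro g hg ⟨x, hx1, hx2⟩
          rcases Sym2.mem_iff.1 hx1 with rfl | rfl
          · exact hβu' g hg hx2
          · exact hβv' g hg hx2
        by_cases h1 : e = s(u, v) <;> by_cases h2 : f = s(u, v)
        · exact absurd (h1.trans h2.symm) hef
        · subst h1; rw [if_pos rfl, if_neg h2]
          exact fun h => key f (hedge' f hf h2) hshare h.symm
        · subst h2; rw [if_neg h1, if_pos rfl]
          obtain ⟨x, hx1, hx2⟩ := hshare
          exact key e (hedge' e he h1) ⟨x, hx2, hx1⟩
        · rw [if_neg h1, if_neg h2]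
          exact hproper' e (hedge' e he h1) f (hedge' f hf h2) hef hshare

lemma ncard_incidenceSet (G : SimpleGraph V) [DecidableRel G.Adj] (v : V) :
    (G.incidenceSet v).ncard = G.degree v := by
  classical
  rw [← Nat.card_coe_set_eq, Nat.card_eq_fintype_card, G.card_incidenceSet_eq_degree]

/-- König's edge colouring theorem: a bipartite graph is `Δ`-edge-colourable. -/
lemma konig (G : SimpleGraph V) [DecidableRel G.Adj] (h2 : G.Colorable 2) :
    G.lineGraph.Colorable G.maxDegree := by
  obtain ⟨c, hb, hp⟩ := konig_aux G.maxDegree G.edgeSet.ncard G h2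
    (fun v => by rw [ncard_incidenceSet]; exact G.degree_le_maxDegree v) le_rfl
  refine ⟨SimpleGraph.Coloring.mk (fun e => ⟨c e.1, hb e.1 e.2⟩) ?_⟩
  rintro e f hadj
  obtain ⟨hne, x, hx1, hx2⟩ := SimpleGraph.lineGraph_adj_iff_exists.1 hadj
  intro hcon
  have : c e.1 = c f.1 := by simpa [Fin.mk.injEq] using hcon
  exact hp e.1 e.2 f.1 f.2 (fun h => hne (Subtype.ext h)) ⟨x, hx1, hx2⟩ this

/-- The star at a vertex is a clique in the line graph. -/
lemma star_clique (H : SimpleGraph V) [DecidableRel H.Adj] (v : V) :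
    ∃ t : Finset H.edgeSet, H.lineGraph.IsClique ↑t ∧ t.card = H.degree v := by
  classical
  refine ⟨(H.incidenceFinset v).attach.map
    ⟨fun x => ⟨x.1, ((H.mem_incidenceFinset _ _).1 x.2).1⟩, ?_⟩, ?_, ?_⟩
  · intro a b h
    have hval : (a.1 : Sym2 V) = b.1 := congrArg (fun z : H.edgeSet => (z : Sym2 V)) h
    exact Subtype.ext hval
  · intro e he f hf hne
    simp only [Finset.coe_map, Set.mem_image, Finset.mem_coe, Finset.mem_attach,
      Function.Embedding.coeFn_mk] at he hf
    obtain ⟨⟨e', he'⟩, -, rfl⟩ := he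
    obtain ⟨⟨f', hf'⟩, -, rfl⟩ := hf
    refine SimpleGraph.lineGraph_adj_iff_exists.2 ⟨hne, v, ?_, ?_⟩
    · exact ((H.mem_incidenceFinset _ _).1 he').2
    · exact ((H.mem_incidenceFinset _ _).1 hf').2
  · rw [Finset.card_map, Finset.card_attach, H.card_incidenceFinset_eq_degree]

/-- In a triangle-free graph every clique of the line graph is a star. -/
lemma clique_card_le (H : SimpleGraph V) [DecidableRel H.Adj] (h3 : H.CliqueFree 3)
    (t : Finset H.edgeSet) (ht : H.lineGraph.IsClique ↑t) : t.card ≤ H.maxDegree := by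
  classical
  rcases Nat.lt_or_ge t.card 2 with hlt | hge
  · interval_cases h : t.card
    · omega
    · obtain ⟨e, he⟩ := Finset.card_eq_one.1 h
      obtain ⟨e0, he0⟩ : ∃ e0, e0 ∈ t := ⟨e, by simp [he]⟩
      obtain ⟨a, b, hab⟩ : ∃ a b, (e0 : Sym2 V) = s(a, b) :=
        Sym2.ind (fun a b => ⟨a, b, rfl⟩) (e0 : Sym2 V)
      have hadj : H.Adj a b := (H.mem_edgeSet).1 (hab ▸ e0.2)
      have : 0 < H.degree a := by
        rw [H.degree_pos_iff_exists_adj]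
        exact ⟨b, hadj⟩
      exact le_trans this (H.degree_le_maxDegree a)
  · obtain ⟨e1, he1, e2, he2, hne12⟩ := Finset.one_lt_card.1 hge
    have hadj12 : H.lineGraph.Adj e1 e2 := ht he1 he2 hne12
    obtain ⟨-, w, hw1, hw2⟩ := SimpleGraph.lineGraph_adj_iff_exists.1 hadj12
    obtain ⟨a, ha⟩ := Sym2.mem_iff_exists.1 hw1
    obtain ⟨b, hb⟩ := Sym2.mem_iff_exists.1 hw2
    have hwa : H.Adj w a := (H.mem_edgeSet).1 (ha ▸ e1.2)
    have hwb : H.Adj w b := (H.mem_edgeSet).1 (hb ▸ e2.2)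
    have hab : a ≠ b := by
      intro h
      apply hne12
      apply Subtype.ext
      rw [ha, hb, h]
    -- every edge of the clique goes through `w`
    have hall : ∀ f ∈ t, w ∈ (f : Sym2 V) := by
      intro f hf
      by_contra hwf
      have hf1 : f ≠ e1 := by rintro rfl; exact hwf (ha ▸ Sym2.mem_mk_left w a)
      have hf2 : f ≠ e2 := by rintro rfl; exact hwf (hb ▸ Sym2.mem_mk_left w b)
      obtain ⟨-, x, hx1, hx2⟩ := SimpleGraph.lineGraph_adj_iff_exists.1 (ht hf he1 hf1)
      obtain ⟨-, y, hy1, hy2⟩ := SimpleGraph.lineGraph_adj_iff_exists.1 (ht hf he2 hf2)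
      have hx2' : x = w ∨ x = a := by rw [ha] at hx2; exact Sym2.mem_iff.1 hx2
      have hy2' : y = w ∨ y = b := by rw [hb] at hy2; exact Sym2.mem_iff.1 hy2
      have hfa : a ∈ (f : Sym2 V) := by
        rcases hx2' with h | h
        · rw [h] at hx1; exact absurd hx1 hwf
        · rw [h] at hx1; exact hx1
      have hfb : b ∈ (f : Sym2 V) := by
        rcases hy2' with h | h
        · rw [h] at hy1; exact absurd hy1 hwf
        · rw [h] at hy1; exact hy1
      -- f contains both a and b, hence f = s(a,b) and we get a triangle
      obtain ⟨p, hp⟩ := Sym2.mem_iff_exists.1 hfa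
      rw [hp] at hfb
      have hfab : (f : Sym2 V) = s(a, b) := by
        rcases Sym2.mem_iff.1 hfb with h | h
        · exact absurd h.symm hab
        · rw [hp, h]
      have hab' : H.Adj a b := (H.mem_edgeSet).1 (hfab ▸ f.2)
      exact h3 {w, a, b} ⟨by
        intro p hp q hq hpq
        simp only [Finset.coe_insert, Set.mem_insert_iff, Finset.coe_singleton,
          Set.mem_singleton_iff] at hp hq
        rcases hp with rfl | rfl | rfl <;> rcases hq with rfl | rfl | rfl <;>
          first
          | exact absurd rfl hpq
          | assumption
          | exact hwa.symm
          | exact hwb.symm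
          | exact hab'.symm,
        by
          rw [Finset.card_insert_of_notMem, Finset.card_insert_of_notMem,
            Finset.card_singleton]
          · simp [hab]
          · simp only [Finset.mem_insert, Finset.mem_singleton]
            push_neg
            exact ⟨hwa.ne, hwb.ne⟩⟩
    -- the edges of the clique inject into the incidence set of `w`
    have hinj : t.card ≤ (H.incidenceFinset w).card := by
      refine Finset.card_le_card_of_injOn (fun f => (f : Sym2 V)) ?_ ?_
      · intro f hf
        rw [Finset.mem_coe, H.mem_incidenceFinset]
        exact ⟨f.2, hall f hf⟩
      · intro f _ g _ h
        exact Subtype.ext h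
    calc t.card ≤ (H.incidenceFinset w).card := hinj
      _ = H.degree w := H.card_incidenceFinset_eq_degree w
      _ ≤ H.maxDegree := H.degree_le_maxDegree w

lemma cliqueNum_le_of_embedding {α β : Type*} [Fintype α] [Fintype β]
    {A : SimpleGraph α} {B : SimpleGraph β} (f : A ↪g B) : A.cliqueNum ≤ B.cliqueNum := by
  classical
  obtain ⟨t, ht⟩ := A.exists_isNClique_cliqueNum
  have hc : B.IsClique ↑(t.map f.toEmbedding) := by
    intro x hx y hy hne
    simp only [Finset.coe_map, Set.mem_image, Finset.mem_coe] at hx hy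
    obtain ⟨a, ha, rfl⟩ := hx
    obtain ⟨b, hb, rfl⟩ := hy
    exact f.map_rel_iff.2 (ht.1 ha hb (fun h => hne (congrArg f h)))
  have h2 : (t.map f.toEmbedding).card ≤ B.cliqueNum :=
    SimpleGraph.IsClique.card_le_cliqueNum (tc := hc)
  rwa [Finset.card_map, ht.2] at h2

lemma main_eq (H : SimpleGraph V) [DecidableRel H.Adj] (h2 : H.Colorable 2) :
    H.lineGraph.chromaticNumber = (H.maxDegree : ℕ∞) ∧
    H.lineGraph.cliqueNum = H.maxDegree := by
  classical
  haveI : Fintype H.edgeSet := Fintype.ofFinite _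
  have h3 : H.CliqueFree 3 := h2.cliqueFree (by norm_num)
  have hup : H.lineGraph.Colorable H.maxDegree := konig H h2
  have hstar : ∃ t : Finset H.edgeSet, H.lineGraph.IsClique ↑t ∧ t.card = H.maxDegree := by
    cases isEmpty_or_nonempty V with
    | inl hV =>
      have h0 : H.maxDegree = 0 :=
        Nat.le_zero.1 (H.maxDegree_le_of_forall_degree_le 0 (fun v => isEmptyElim v))
      exact ⟨∅, by simp [SimpleGraph.IsClique], by simp [h0]⟩
    | inr hV =>
      obtain ⟨v, hv⟩ := H.exists_maximal_degree_vertex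
      obtain ⟨t, ht1, ht2⟩ := star_clique H v
      exact ⟨t, ht1, by rw [ht2, hv]⟩
  obtain ⟨t, htc, htcard⟩ := hstar
  constructor
  · refine le_antisymm hup.chromaticNumber_le ?_
    have := htc.card_le_chromaticNumber
    rwa [htcard] at this
  · refine le_antisymm ?_ ?_
    · obtain ⟨s', hs'⟩ := H.lineGraph.exists_isNClique_cliqueNum
      rw [← hs'.2]
      exact clique_card_le H h3 s' hs'.1
    · have := SimpleGraph.IsClique.card_le_cliqueNum (tc := htc)
      rwa [htcard] at this

end KonigEC

/-- König's edge colouring theorem and its consequence: for bipartite `G` the chromatic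
index equals the maximum degree, every edge-induced (i.e. spanning) subgraph `H` with
`Δ(H) ≠ 2` or `H` triangle-free satisfies `χ'(H) = ω(L(H))`, and `G` is line perfect. -/
theorem bipartite_linePerfect {V : Type} [Fintype V] (G : SimpleGraph V)
    [DecidableRel G.Adj] (hbip : G.Colorable 2) :
    G.lineGraph.chromaticNumber = (G.maxDegree : ℕ∞) ∧
    (∀ (H : SimpleGraph V) [DecidableRel H.Adj], H ≤ G →
      (H.maxDegree ≠ 2 ∨ H.CliqueFree 3) →
      H.lineGraph.chromaticNumber = (H.lineGraph.cliqueNum : ℕ∞)) ∧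
    G.lineGraph.IsPerfect := by
  classical
  have part2 : ∀ (H : SimpleGraph V) [DecidableRel H.Adj], H ≤ G →
      H.lineGraph.chromaticNumber = (H.lineGraph.cliqueNum : ℕ∞) := by
    intro H _ hHG
    obtain ⟨h1, h2⟩ := KonigEC.main_eq H (hbip.mono_left hHG)
    rw [h1, h2]
  refine ⟨(KonigEC.main_eq G hbip).1, fun H _ hHG _ => part2 H hHG, ?_⟩
  intro s
  set H : SimpleGraph V := SimpleGraph.fromEdgeSet (Subtype.val '' s) with hHdef
  haveI : DecidableRel H.Adj := Classical.decRel _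
  have hsub : (Subtype.val '' s : Set (Sym2 V)) ⊆ G.edgeSet := by
    rintro e ⟨x, -, rfl⟩; exact x.2
  have hHG : H ≤ G :=
    le_trans (SimpleGraph.fromEdgeSet_mono hsub) (le_of_eq G.fromEdgeSet_edgeSet)
  have hEdge : H.edgeSet = Subtype.val '' s := by
    rw [hHdef, SimpleGraph.edgeSet_fromEdgeSet]
    ext e
    simp only [Set.mem_diff, Set.mem_setOf_eq]
    constructor
    · exact fun h => h.1
    · intro h
      exact ⟨h, fun hd => (G.not_isDiag_of_mem_edgeSet (hsub h)) hd⟩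
  let eqv : s ≃ H.edgeSet :=
    (Equiv.Set.image Subtype.val s Subtype.val_injective).trans (Equiv.setCongr hEdge.symm)
  have heqv : ∀ a : ↥s, ((eqv a : H.edgeSet) : Sym2 V) = ((a : G.edgeSet) : Sym2 V) :=
    fun a => rfl
  let iso : (G.lineGraph.induce s) ≃g H.lineGraph := by
    refine ⟨eqv, ?_⟩
    intro a b
    show H.lineGraph.Adj (eqv a) (eqv b) ↔ G.lineGraph.Adj ↑a ↑b
    rw [SimpleGraph.lineGraph_adj_iff_exists, SimpleGraph.lineGraph_adj_iff_exists]
    constructor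
    · rintro ⟨hne, x, hx1, hx2⟩
      refine ⟨fun h => hne (congrArg eqv (Subtype.ext h)), x, ?_, ?_⟩
      · rw [heqv] at hx1; exact hx1
      · rw [heqv] at hx2; exact hx2
    · rintro ⟨hne, x, hx1, hx2⟩
      refine ⟨fun h => hne (congrArg Subtype.val (eqv.injective h)), x, ?_, ?_⟩
      · rw [heqv]; exact hx1
      · rw [heqv]; exact hx2
  haveI : Fintype H.edgeSet := Fintype.ofFinite _
  haveI : Fintype (↥s) := Fintype.ofFinite _
  have hiso1 : (G.lineGraph.induce s).chromaticNumber = H.lineGraph.chromaticNumber :=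
    le_antisymm (SimpleGraph.chromaticNumber_mono_of_hom iso.toHom)
      (SimpleGraph.chromaticNumber_mono_of_hom iso.symm.toHom)
  have hiso2 : (G.lineGraph.induce s).cliqueNum = H.lineGraph.cliqueNum :=
    le_antisymm (KonigEC.cliqueNum_le_of_embedding iso.toEmbedding)
      (KonigEC.cliqueNum_le_of_embedding iso.symm.toEmbedding)
  rw [hiso1, hiso2]
  exact part2 H hHG
end

section
/- If a connected simple graph G contains the complete graph K_4 as a subgraph and contains neither a path P_6 on 6 vertices nor a cycle C_5 as a subgraph, then there is a vertex v of the K_4 such that every edge of G not belonging to the K_4 is incident to v (i.e., G is a 'tetrahedron of flowers': a K_4 with pendant edges attached at a single vertex). -/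
open SimpleGraph

lemma makeP6 {V : Type} {G : SimpleGraph V} (v0 v1 v2 v3 v4 v5 : V)
    (h01 : G.Adj v0 v1) (h12 : G.Adj v1 v2) (h23 : G.Adj v2 v3)
    (h34 : G.Adj v3 v4) (h45 : G.Adj v4 v5)
    (d02 : v0 ≠ v2) (d03 : v0 ≠ v3) (d04 : v0 ≠ v4) (d05 : v0 ≠ v5)
    (d13 : v1 ≠ v3) (d14 : v1 ≠ v4) (d15 : v1 ≠ v5)
    (d24 : v2 ≠ v4) (d25 : v2 ≠ v5) (d35 : v3 ≠ v5) :
    ∃ f : Fin 6 → V, Function.Injective f ∧ ∀ a b, (pathGraph 6).Adj a b → G.Adj (f a) (f b) := by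
  have d01 := h01.ne; have d12 := h12.ne; have d23 := h23.ne
  have d34 := h34.ne; have d45 := h45.ne
  refine ⟨fun i => if i.val = 0 then v0 else if i.val = 1 then v1 else if i.val = 2 then v2
    else if i.val = 3 then v3 else if i.val = 4 then v4 else v5, ?_, ?_⟩
  · intro a b hab
    fin_cases a <;> fin_cases b <;> simp_all
  · intro a b hab
    rw [pathGraph_adj] at hab
    fin_cases a <;> fin_cases b <;> simp_all <;>
      first
        | exact h01 | exact h01.symm | exact h12 | exact h12.symm
        | exact h23 | exact h23.symm | exact h34 | exact h34.symm
        | exact h45 | exact h45.symm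

lemma makeC5 {V : Type} {G : SimpleGraph V} (v0 v1 v2 v3 v4 : V)
    (h01 : G.Adj v0 v1) (h12 : G.Adj v1 v2) (h23 : G.Adj v2 v3)
    (h34 : G.Adj v3 v4) (h40 : G.Adj v4 v0)
    (d02 : v0 ≠ v2) (d03 : v0 ≠ v3)
    (d13 : v1 ≠ v3) (d14 : v1 ≠ v4) (d24 : v2 ≠ v4) :
    ∃ f : Fin 5 → V, Function.Injective f ∧ ∀ a b, (cycleGraph 5).Adj a b → G.Adj (f a) (f b) := by
  have d01 := h01.ne; have d12 := h12.ne; have d23 := h23.ne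
  have d34 := h34.ne; have d40 := h40.ne
  refine ⟨fun i => if i.val = 0 then v0 else if i.val = 1 then v1 else if i.val = 2 then v2
    else if i.val = 3 then v3 else v4, ?_, ?_⟩
  · intro a b hab
    fin_cases a <;> fin_cases b <;> simp_all
  · intro a b hab
    rw [cycleGraph_adj'] at hab
    fin_cases a <;> fin_cases b <;> simp_all <;>
      first
        | exact h01 | exact h01.symm | exact h12 | exact h12.symm
        | exact h23 | exact h23.symm | exact h34 | exact h34.symm
        | exact h40 | exact h40.symm | exact absurd hab (by decide)

lemma fin4two : ∀ j k : Fin 4, j ≠ k → ∃ c d : Fin 4,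
    c ≠ d ∧ c ≠ j ∧ c ≠ k ∧ d ≠ j ∧ d ≠ k := by decide

lemma fin4three : ∀ j : Fin 4, ∃ a b c : Fin 4,
    a ≠ b ∧ a ≠ c ∧ b ≠ c ∧ a ≠ j ∧ b ≠ j ∧ c ≠ j := by decide

/-- If a connected graph contains `K_4` but no `P_6` and no `C_5` as subgraphs,
then it is a tetrahedron of flowers: there is a vertex of the `K_4` to which every
edge outside the `K_4` is incident. -/
theorem tetrahedron_of_flowers {V : Type} (G : SimpleGraph V) (hc : G.Connected)
    (hK4 : ContainsSub G (completeGraph (Fin 4)))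
    (hP6 : ¬ ContainsSub G (pathGraph 6))
    (hC5 : ¬ ContainsSub G (cycleGraph 5)) :
    ∃ f : Fin 4 → V, Function.Injective f ∧
      (∀ a b : Fin 4, a ≠ b → G.Adj (f a) (f b)) ∧
      ∃ i : Fin 4, ∀ e ∈ G.edgeSet, (¬ ∃ a b : Fin 4, e = s(f a, f b)) → f i ∈ e := by
  classical
  obtain ⟨f, hinj, hA⟩ := hK4
  have hadj : ∀ a b : Fin 4, a ≠ b → G.Adj (f a) (f b) := by
    intro a b h; exact hA a b h
  have hne : ∀ {a b : Fin 4}, a ≠ b → f a ≠ f b := fun h e => h (hinj e)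
  -- no "tail": x outside K adjacent to some f j cannot have a neighbor outside K
  have noTail : ∀ (j : Fin 4) (x y : V), (∀ m, x ≠ f m) → (∀ m, y ≠ f m) →
      G.Adj (f j) x → G.Adj x y → False := by
    intro j x y hx hy h1 h2
    obtain ⟨a, b, c, hab, hac, hbc, haj, hbj, hcj⟩ := fin4three j
    refine hP6 (makeP6 (f c) (f b) (f a) (f j) x y (hadj _ _ (Ne.symm hbc))
      (hadj _ _ (Ne.symm hab)) (hadj _ _ haj) h1 h2
      (hne hac).symm (hne hcj) (fun e => hx c e.symm) (fun e => hy c e.symm)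
      (hne hbj) (fun e => hx b e.symm) (fun e => hy b e.symm)
      (fun e => hx a e.symm) (fun e => hy a e.symm) (fun e => hy j e.symm))
  -- every vertex is in K or adjacent to a vertex of K
  have key : ∀ (a b : V), G.Walk a b →
      ((∃ m, a = f m) ∨ ∃ j, G.Adj (f j) a) →
      ((∃ m, b = f m) ∨ ∃ j, G.Adj (f j) b) := by
    intro a b w
    induction w with
    | nil => exact id
    | @cons u v _ h _ ih =>
      intro hu
      apply ih
      by_cases hv : ∃ m, v = f m
      · exact Or.inl hv
      · rcases hu with ⟨m, rfl⟩ | ⟨j, hj⟩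
        · exact Or.inr ⟨m, h⟩
        · by_cases hu' : ∃ m, u = f m
          · obtain ⟨m, rfl⟩ := hu'; exact Or.inr ⟨m, h⟩
          · push_neg at hv hu'
            exact absurd (noTail j u v hu' hv hj h) not_false
  have claimB : ∀ x : V, (∃ m, x = f m) ∨ ∃ j, G.Adj (f j) x := by
    intro x
    obtain ⟨w⟩ := hc.preconnected (f 0) x
    exact key (f 0) x w (Or.inl ⟨0, rfl⟩)
  -- a vertex outside K cannot be adjacent to two vertices of K
  have noDouble : ∀ (j k : Fin 4) (y : V), j ≠ k → (∀ m, y ≠ f m) →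
      G.Adj (f j) y → G.Adj (f k) y → False := by
    intro j k y hjk hy h1 h2
    obtain ⟨c, d, hcd, hcj, hck, hdj, hdk⟩ := fin4two j k hjk
    exact hC5 (makeC5 y (f j) (f c) (f d) (f k) h1.symm (hadj _ _ (Ne.symm hcj))
      (hadj _ _ hcd) (hadj _ _ hdk) h2
      (hy c) (hy d) (hne hdj).symm (hne hjk) (hne hck))
  -- pendant edges all attach at the same vertex
  have onePoint : ∀ (j k : Fin 4) (y z : V), (∀ m, y ≠ f m) → (∀ m, z ≠ f m) →
      G.Adj (f j) y → G.Adj (f k) z → j = k := by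
    intro j k y z hy hz h1 h2
    by_contra hjk
    by_cases hyz : y = z
    · subst hyz; exact noDouble j k y hjk hy h1 h2
    · obtain ⟨c, d, hcd, hcj, hck, hdj, hdk⟩ := fin4two j k hjk
      exact hP6 (makeP6 y (f j) (f c) (f d) (f k) z h1.symm (hadj _ _ (Ne.symm hcj))
        (hadj _ _ hcd) (hadj _ _ hdk) h2
        (hy c) (hy d) (hy k) hyz
        (hne hdj).symm (hne hjk) (fun e => hz j e.symm)
        (hne hck) (fun e => hz c e.symm) (fun e => hz d e.symm))
  -- every edge not in K is a pendant edge
  have pend : ∀ (e : Sym2 V), e ∈ G.edgeSet → (¬ ∃ a b : Fin 4, e = s(f a, f b)) →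
      ∃ j y, e = s(f j, y) ∧ (∀ m, y ≠ f m) ∧ G.Adj (f j) y := by
    intro e
    induction e using Sym2.ind with
    | _ x y =>
      intro he hn
      rw [mem_edgeSet] at he
      by_cases hx : ∃ m, x = f m
      · obtain ⟨j, rfl⟩ := hx
        by_cases hy : ∃ m, y = f m
        · obtain ⟨m, rfl⟩ := hy; exact absurd ⟨j, m, rfl⟩ hn
        · push_neg at hy; exact ⟨j, y, rfl, hy, he⟩
      · by_cases hy : ∃ m, y = f m
        · obtain ⟨m, rfl⟩ := hy; push_neg at hx
          exact ⟨m, x, Sym2.eq_swap, hx, he.symm⟩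
        · push_neg at hx hy
          rcases claimB x with ⟨m, rfl⟩ | ⟨j, hj⟩
          · exact absurd rfl (hx m)
          · exact absurd (noTail j x y hx hy hj he) not_false
  refine ⟨f, hinj, hadj, ?_⟩
  by_cases hS : ∃ e ∈ G.edgeSet, ¬ ∃ a b : Fin 4, e = s(f a, f b)
  · obtain ⟨e₀, he₀, hn₀⟩ := hS
    obtain ⟨j, y, he, hy, hjy⟩ := pend e₀ he₀ hn₀
    refine ⟨j, ?_⟩
    intro e he' hn'
    obtain ⟨k, z, rfl, hz, hkz⟩ := pend e he' hn'
    have : k = j := onePoint k j z y hz hy hkz hjy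
    subst this
    exact Sym2.mem_mk_left _ _
  · push_neg at hS
    exact ⟨0, fun e he hn => absurd (hS e he) hn⟩
end

section
/- The line graph of a vase of n flowers (a triangle with n pendant edges attached at one triangle vertex) is isomorphic to the join K_1 ∨ (K_1 ∨ (K_1 ∪ K_n)), i.e., an 'ear animal' with parameters k = 0, a = b = 1, c = n. -/
open SimpleGraph

/-- The join of two simple graphs: both graphs together with all edges between them. -/
def gJoin {α β : Type*} (G : SimpleGraph α) (H : SimpleGraph β) : SimpleGraph (α ⊕ β) :=
  SimpleGraph.fromRel (fun x y =>
    (∃ a b, x = Sum.inl a ∧ y = Sum.inl b ∧ G.Adj a b) ∨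
    (∃ a b, x = Sum.inr a ∧ y = Sum.inr b ∧ H.Adj a b) ∨
    (x.isLeft = true ∧ y.isRight = true))

/-- The vase of `n` flowers: a triangle on `w₁, w₂, w₃` together with `n` leaves
attached to `w₁`. -/
def vase (n : ℕ) : SimpleGraph (Fin 3 ⊕ Fin n) :=
  SimpleGraph.fromRel (fun x y =>
    (x.isLeft = true ∧ y.isLeft = true) ∨ (x = Sum.inl 0 ∧ y.isRight = true))

@[simp] lemma gJoin_adj_inl_inl {α β : Type*} (G : SimpleGraph α) (H : SimpleGraph β) (a b : α) :
    (gJoin G H).Adj (Sum.inl a) (Sum.inl b) ↔ G.Adj a b := by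
  simp only [gJoin, fromRel_adj, ne_eq, Sum.inl.injEq, Sum.isRight_inl, Sum.isLeft_inl,
    and_false, false_and, or_false, and_true]
  constructor
  · rintro ⟨hne, h⟩
    rcases h with (⟨x, y, hx, hy, hxy⟩ | ⟨x, y, hx, hy, hxy⟩ | h) |
      (⟨x, y, hx, hy, hxy⟩ | ⟨x, y, hx, hy, hxy⟩ | h) <;> simp_all
    exact hxy.symm
  · intro h
    exact ⟨h.ne, Or.inl (Or.inl ⟨a, b, rfl, rfl, h⟩)⟩

@[simp] lemma gJoin_adj_inr_inr {α β : Type*} (G : SimpleGraph α) (H : SimpleGraph β) (a b : β) :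
    (gJoin G H).Adj (Sum.inr a) (Sum.inr b) ↔ H.Adj a b := by
  simp only [gJoin, fromRel_adj, ne_eq, Sum.inr.injEq, Sum.isRight_inr, Sum.isLeft_inr,
    and_false, false_and, or_false, and_true, true_and]
  constructor
  · rintro ⟨hne, h⟩
    rcases h with (⟨x, y, hx, hy, hxy⟩ | ⟨x, y, hx, hy, hxy⟩ | h) |
      (⟨x, y, hx, hy, hxy⟩ | ⟨x, y, hx, hy, hxy⟩ | h) <;> simp_all
    exact hxy.symm
  · intro h
    exact ⟨h.ne, Or.inl (Or.inr (Or.inl ⟨a, b, rfl, rfl, h⟩))⟩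

@[simp] lemma gJoin_adj_inl_inr {α β : Type*} (G : SimpleGraph α) (H : SimpleGraph β) (a : α)
    (b : β) : (gJoin G H).Adj (Sum.inl a) (Sum.inr b) := by
  refine ⟨by simp, Or.inl (Or.inr (Or.inr (by simp)))⟩

@[simp] lemma gJoin_adj_inr_inl {α β : Type*} (G : SimpleGraph α) (H : SimpleGraph β) (a : β)
    (b : α) : (gJoin G H).Adj (Sum.inr a) (Sum.inl b) :=
  (gJoin_adj_inl_inr G H b a).symm

abbrev T (n : ℕ) := Fin 1 ⊕ (Fin 1 ⊕ (Fin 1 ⊕ Fin n))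

def emap (n : ℕ) : (Fin 3 ⊕ Fin n) → (Fin 3 ⊕ Fin n) → T n
| .inl i, .inl j =>
    if i.val + j.val = 1 then .inl 0
    else if i.val + j.val = 2 then .inr (.inl 0)
    else .inr (.inr (.inl 0))
| .inl _, .inr k => .inr (.inr (.inr k))
| .inr k, .inl _ => .inr (.inr (.inr k))
| .inr _, .inr _ => .inl 0

lemma emap_symm (n : ℕ) (x y : Fin 3 ⊕ Fin n) : emap n x y = emap n y x := by
  cases x <;> cases y <;> simp [emap, Nat.add_comm]

def vmap (n : ℕ) : T n → (vase n).edgeSet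
| .inl _ => ⟨s(.inl 0, .inl 1), by simp [vase]⟩
| .inr (.inl _) => ⟨s(.inl 0, .inl 2), by simp [vase]⟩
| .inr (.inr (.inl _)) => ⟨s(.inl 1, .inl 2), by simp [vase]⟩
| .inr (.inr (.inr k)) => ⟨s(.inl 0, .inr k), by simp [vase]⟩


lemma key (n : ℕ) (u v : T n) :
    (vase n).lineGraph.Adj (vmap n u) (vmap n v) ↔
      (gJoin (completeGraph (Fin 1))
        (gJoin (completeGraph (Fin 1))
          ((completeGraph (Fin 1)) ⊕g (completeGraph (Fin n))))).Adj u v := by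
  rw [lineGraph_adj_iff_exists]
  rcases u with a | a | a | k <;> rcases v with b | b | b | k' <;>
    simp [vmap, completeGraph, Sym2.eq, Sym2.rel_iff', Subtype.ext_iff] <;> first | exact Subsingleton.elim a b | tauto

/-- The line graph of a vase of `n` flowers is the ear animal
`K₁ ∨ (K₁ ∨ (K₁ ∪ Kₙ))`. -/
theorem lineGraph_vase (n : ℕ) :
    Nonempty ((vase n).lineGraph ≃g
      gJoin (completeGraph (Fin 1))
        (gJoin (completeGraph (Fin 1))
          ((completeGraph (Fin 1)) ⊕g (completeGraph (Fin n))))) := by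
  refine ⟨Iso.symm ⟨Equiv.mk (vmap n)
    (fun e => Sym2.lift ⟨emap n, emap_symm n⟩ e.val) ?_ ?_, ?_⟩⟩
  · rintro (a | a | a | k) <;> simp [vmap, emap] <;> omega
  · rintro ⟨e, he⟩
    induction e using Sym2.ind with
    | _ x y =>
      rw [SimpleGraph.mem_edgeSet] at he
      simp only [vase, fromRel_adj] at he
      obtain ⟨hne, h⟩ := he
      ext
      rcases x with i | k <;> rcases y with j | k'
      · fin_cases i <;> fin_cases j <;> simp_all [vmap, emap, Sym2.eq_swap] <;> tauto
      · simp_all [vmap, emap]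
      · simp_all [vmap, emap, Sym2.eq_swap]
      · simp_all
  · intro u v
    exact key n u v
end
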